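/- arXiv:2508.08150 — 2 statements merged into one kernel-verified Lean document; each statement's English description precedes it below -/
import Mathlib

section
/- If $X \subseteq \mathbb{R}^d$ contains a point $x$ with lower porosity $\underline{\mathrm{por}}(X, x) = 0$ realized along a sequence of scales in a suitably uniform way (specifically: for every $\epsilon > 0$ and every scale ratio, there are scales $r$ at which every hole in $B(x,r) \setminus X$ has radius at most $\epsilon r$), then $\dim_A X = d$. -/
set_option maxHeartbeats 1000000


open MeasureTheory Filter

noncomputable section

/-- Minimal number of closed balls of radius `r` needed to cover `X`. -/
def coverN {α : Type*} [PseudoMetricSpace α] (X : Set α) (r : ℝ) : ℕ :=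
  sInf {n : ℕ | ∃ S : Finset α, S.card ≤ n ∧ X ⊆ ⋃ x ∈ S, Metric.closedBall x r}

/-- Assouad dimension. -/
def assouadDim {α : Type*} [PseudoMetricSpace α] (X : Set α) : ℝ :=
  sInf {s : ℝ | ∃ C > (0 : ℝ), ∀ x ∈ X, ∀ R r : ℝ, 0 < r → r < R →
    ((coverN (Metric.ball x R ∩ X) r : ℝ) ≤ C * (R / r) ^ s)}

/-- Any ball of radius `R` in `ℝ^d` (sup metric) is covered by `⌈R/r⌉₊ ^ d` closed
balls of radius `r`, via an explicit grid. -/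
lemma grid_cover {d : ℕ} (x : Fin d → ℝ) {R r : ℝ} (hr : 0 < r) :
    ∃ S : Finset (Fin d → ℝ), S.card ≤ ⌈R / r⌉₊ ^ d ∧
      Metric.ball x R ⊆ ⋃ c ∈ S, Metric.closedBall c r := by
  set N := ⌈R / r⌉₊ with hN
  refine ⟨Finset.image
      (fun k : Fin d → Fin N => fun i => x i - R + (2 * ((k i : ℕ) : ℝ) + 1) * r)
      Finset.univ, ?_, ?_⟩
  · calc _ ≤ (Finset.univ : Finset (Fin d → Fin N)).card := Finset.card_image_le
      _ = N ^ d := by simp [Finset.card_univ]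
  · intro y hy
    have hy' : ∀ i, |y i - x i| < R := fun i => by
      calc |y i - x i| = dist (y i) (x i) := (Real.dist_eq _ _).symm
        _ ≤ dist y x := dist_le_pi_dist y x i
        _ < R := Metric.mem_ball.1 hy
    set u : Fin d → ℝ := fun i => y i - x i + R with hu
    have hu0 : ∀ i, 0 ≤ u i := fun i => by have := abs_lt.1 (hy' i); simp [hu]; linarith [this.1]
    have hu2R : ∀ i, u i < 2 * R := fun i => by have := abs_lt.1 (hy' i); simp [hu]; linarith [this.2]
    set k : Fin d → ℕ := fun i => ⌊u i / (2 * r)⌋₊ with hk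
    have h2r : (0:ℝ) < 2 * r := by linarith
    have hdiv0 : ∀ i, 0 ≤ u i / (2 * r) := fun i => div_nonneg (hu0 i) h2r.le
    have hklt : ∀ i, k i < N := by
      intro i
      have h1 : u i / (2 * r) < N := by
        rw [div_lt_iff₀ h2r]
        have hceil := Nat.le_ceil (R / r)
        rw [div_le_iff₀ hr] at hceil
        nlinarith [hu2R i]
      exact (Nat.floor_lt (hdiv0 i)).2 h1
    refine Set.mem_iUnion₂.2 ⟨fun i => x i - R + (2 * ((k i : ℕ) : ℝ) + 1) * r, ?_, ?_⟩
    · exact Finset.mem_image.2 ⟨fun i => ⟨k i, hklt i⟩, Finset.mem_univ _, rfl⟩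
    · rw [Metric.mem_closedBall, dist_pi_le_iff hr.le]
      intro i
      rw [Real.dist_eq]
      have h1 : (k i : ℝ) * (2 * r) ≤ u i := by
        have : (k i : ℝ) ≤ u i / (2 * r) := Nat.floor_le (hdiv0 i)
        calc (k i : ℝ) * (2 * r) ≤ (u i / (2 * r)) * (2 * r) := by nlinarith
          _ = u i := div_mul_cancel₀ _ h2r.ne'
      have h2 : u i < ((k i : ℝ) + 1) * (2 * r) := by
        have : u i / (2 * r) < (k i : ℝ) + 1 := Nat.lt_floor_add_one (u i / (2 * r))
        calc u i = (u i / (2*r)) * (2*r) := (div_mul_cancel₀ _ h2r.ne').symm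
          _ < ((k i : ℝ) + 1) * (2 * r) := by nlinarith
      have heq : y i - (x i - R + (2 * ((k i : ℕ) : ℝ) + 1) * r) = u i - (2 * (k i : ℝ) + 1) * r := by
        simp [hu]; ring
      rw [heq, abs_le]
      constructor <;> nlinarith

lemma coverN_le_of_cover {α : Type*} [PseudoMetricSpace α] {X : Set α} {r : ℝ}
    {S : Finset α} (h : X ⊆ ⋃ c ∈ S, Metric.closedBall c r) : coverN X r ≤ S.card :=
  Nat.sInf_le ⟨S, le_rfl, h⟩

/-- If `X ⊆ ℝ^d` contains a point `x` at which the lower porosity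
vanishes in the uniform sense that for every `ε > 0` there are arbitrarily small scales
`r` at which every hole of `B(x,r) \ X` has radius at most `ε r`, then the Assouad
dimension of `X` is maximal, equal to `d`. -/
theorem zero_porosity_implies_full_assouad_dimension
    {d : ℕ} (hd : 1 ≤ d) (X : Set (Fin d → ℝ)) (x : Fin d → ℝ) (hx : x ∈ X)
    (hpor : ∀ ε > (0 : ℝ), ∀ r₀ > (0 : ℝ), ∃ r : ℝ, 0 < r ∧ r < r₀ ∧
      ∀ (y : Fin d → ℝ) (ρ : ℝ), 0 < ρ →
        Metric.ball y ρ ⊆ Metric.ball x r \ X → ρ ≤ ε * r) :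
    assouadDim X = d := by
  set A : Set ℝ := {s : ℝ | ∃ C > (0 : ℝ), ∀ x ∈ X, ∀ R r : ℝ, 0 < r → r < R →
    ((coverN (Metric.ball x R ∩ X) r : ℝ) ≤ C * (R / r) ^ s)} with hA
  -- Upper bound: `d ∈ A`.
  have hmem : (d:ℝ) ∈ A := by
    refine ⟨2^d, by positivity, ?_⟩
    intro x' _ R r hr hRr
    have hR : 0 < R := hr.trans hRr
    obtain ⟨S, hcard, hcov⟩ := grid_cover x' (R := R) hr
    have h1 : coverN (Metric.ball x' R ∩ X) r ≤ ⌈R/r⌉₊ ^ d :=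
      le_trans (coverN_le_of_cover (Set.inter_subset_left.trans hcov)) hcard
    have hq : (1:ℝ) < R / r := (one_lt_div hr).2 hRr
    have hceil : (⌈R/r⌉₊ : ℝ) ≤ 2 * (R/r) := by
      have := Nat.ceil_lt_add_one (le_of_lt (lt_trans one_pos hq))
      linarith
    calc (coverN (Metric.ball x' R ∩ X) r : ℝ) ≤ ((⌈R/r⌉₊ ^ d : ℕ) : ℝ) := by exact_mod_cast h1
      _ = (⌈R/r⌉₊ : ℝ) ^ d := by push_cast; ring
      _ ≤ (2 * (R/r)) ^ d := pow_le_pow_left₀ (by positivity) hceil d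
      _ = 2^d * (R/r)^d := mul_pow _ _ _
      _ = 2^d * (R/r) ^ ((d:ℕ):ℝ) := by rw [Real.rpow_natCast]
  -- Lower bound: every `s ∈ A` satisfies `d ≤ s`.
  have hlb : ∀ s ∈ A, (d:ℝ) ≤ s := by
    intro s hs
    obtain ⟨C, hC, hbound⟩ := hs
    by_contra hlt
    push_neg at hlt
    set t : ℝ := (d:ℝ) - s with ht
    have ht0 : 0 < t := by simp [ht]; linarith
    set B : ℝ := 2 * C * 6^d with hB
    have hB0 : 0 < B := by positivity
    set ε : ℝ := min (1/8) (B⁻¹ ^ t⁻¹) with hε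
    have hε0 : 0 < ε := lt_min (by norm_num) (Real.rpow_pos_of_pos (by positivity) _)
    have hε8 : ε ≤ 1/8 := min_le_left _ _
    have hεt : ε ^ t ≤ B⁻¹ := by
      calc ε ^ t ≤ (B⁻¹ ^ t⁻¹) ^ t := Real.rpow_le_rpow hε0.le (min_le_right _ _) ht0.le
        _ = B⁻¹ ^ (t⁻¹ * t) := (Real.rpow_mul (by positivity) _ _).symm
        _ = B⁻¹ := by rw [inv_mul_cancel₀ ht0.ne', Real.rpow_one]
    obtain ⟨r, hr0, hr1, hhole⟩ := hpor ε hε0 1 one_pos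
    have hεr : 0 < ε * r := mul_pos hε0 hr0
    -- extract an optimal cover
    have hne : {n : ℕ | ∃ S : Finset (Fin d → ℝ), S.card ≤ n ∧
        Metric.ball x r ∩ X ⊆ ⋃ c ∈ S, Metric.closedBall c (ε*r)}.Nonempty := by
      obtain ⟨S, _, hcov⟩ := grid_cover x (R := r) hεr
      exact ⟨S.card, S, le_rfl, Set.inter_subset_left.trans hcov⟩
    obtain ⟨S, hScard, hScov⟩ := Nat.sInf_mem hne
    set n := coverN (Metric.ball x r ∩ X) (ε * r) with hn_def
    have hScard' : S.card ≤ n := hScard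
    have hn : (n:ℝ) ≤ C * (r/(ε*r)) ^ s :=
      hbound x hx r (ε*r) hεr (by nlinarith)
    clear_value n
    -- geometric claim
    have hgeo : Metric.ball x ((1 - 2*ε) * r) ⊆ ⋃ c ∈ S, Metric.closedBall c (3*(ε*r)) := by
      intro z hz
      have hz' : dist z x < (1 - 2*ε)*r := Metric.mem_ball.1 hz
      have hinter : (Metric.ball z (2*(ε*r)) ∩ X).Nonempty := by
        by_contra hcon
        rw [Set.not_nonempty_iff_eq_empty] at hcon
        have hsub : Metric.ball z (2*(ε*r)) ⊆ Metric.ball x r \ X := by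
          intro w hw
          have hwz : dist w z < 2*(ε*r) := Metric.mem_ball.1 hw
          refine ⟨Metric.mem_ball.2 ?_, fun hwX => Set.eq_empty_iff_forall_notMem.1 hcon w ⟨hw, hwX⟩⟩
          calc dist w x ≤ dist w z + dist z x := dist_triangle _ _ _
            _ < 2*(ε*r) + (1-2*ε)*r := by linarith
            _ = r := by ring
        have := hhole z (2*(ε*r)) (by positivity) hsub
        nlinarith
      obtain ⟨p, hpz, hpX⟩ := hinter
      have hpz' : dist p z < 2*(ε*r) := Metric.mem_ball.1 hpz
      have hpball : p ∈ Metric.ball x r ∩ X := by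
        refine ⟨Metric.mem_ball.2 ?_, hpX⟩
        calc dist p x ≤ dist p z + dist z x := dist_triangle _ _ _
          _ < 2*(ε*r) + (1-2*ε)*r := by linarith
          _ = r := by ring
      obtain ⟨c, hcS, hpc⟩ := Set.mem_iUnion₂.1 (hScov hpball)
      have hpc' : dist p c ≤ ε*r := Metric.mem_closedBall.1 hpc
      refine Set.mem_iUnion₂.2 ⟨c, hcS, Metric.mem_closedBall.2 ?_⟩
      have hzp : dist z p < 2*(ε*r) := by rw [dist_comm]; exact hpz'
      calc dist z c ≤ dist z p + dist p c := dist_triangle _ _ _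
        _ ≤ 2*(ε*r) + ε*r := by linarith
        _ = 3*(ε*r) := by ring
    -- volume comparison
    have h1pos : (0:ℝ) < (1-2*ε)*r := by nlinarith
    have hvol : ENNReal.ofReal (2*((1-2*ε)*r)) ^ d ≤ (n : ENNReal) * ENNReal.ofReal (2*(3*(ε*r))) ^ d := by
      have hb : volume (Metric.ball x ((1-2*ε)*r)) = ENNReal.ofReal (2*((1-2*ε)*r)) ^ d := by
        rw [volume_pi_ball _ h1pos]; simp [Real.volume_ball]
      have hc : ∀ c : Fin d → ℝ, volume (Metric.closedBall c (3*(ε*r)))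
          = ENNReal.ofReal (2*(3*(ε*r))) ^ d := fun c => by
        rw [volume_pi_closedBall _ (by positivity)]; simp [Real.volume_closedBall]
      calc ENNReal.ofReal (2*((1-2*ε)*r)) ^ d = volume (Metric.ball x ((1-2*ε)*r)) := hb.symm
        _ ≤ volume (⋃ c ∈ S, Metric.closedBall c (3*(ε*r))) := measure_mono hgeo
        _ ≤ ∑ c ∈ S, volume (Metric.closedBall c (3*(ε*r))) := measure_biUnion_finset_le _ _
        _ = (S.card : ENNReal) * ENNReal.ofReal (2*(3*(ε*r))) ^ d := by
            simp [hc, Finset.sum_const, nsmul_eq_mul]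
        _ ≤ (n : ENNReal) * ENNReal.ofReal (2*(3*(ε*r))) ^ d :=
            mul_le_mul_left (by exact_mod_cast hScard') _
    have hreal : (2*((1-2*ε)*r)) ^ d ≤ (n:ℝ) * (2*(3*(ε*r))) ^ d := by
      rw [← ENNReal.ofReal_pow (by positivity), ← ENNReal.ofReal_pow (by positivity),
          ← ENNReal.ofReal_natCast n, ← ENNReal.ofReal_mul (by positivity)] at hvol
      exact (ENNReal.ofReal_le_ofReal_iff (by positivity)).1 hvol
    have hr_d : r ^ d ≤ (n:ℝ) * (6*(ε*r)) ^ d := by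
      have h1 : r ≤ 2*((1-2*ε)*r) := by nlinarith
      calc r^d ≤ (2*((1-2*ε)*r))^d := pow_le_pow_left₀ hr0.le h1 d
        _ ≤ (n:ℝ) * (2*(3*(ε*r)))^d := hreal
        _ = (n:ℝ) * (6*(ε*r))^d := by ring_nf
    have hn_lb : (1:ℝ) ≤ (n:ℝ) * 6^d * ε^d := by
      have hrd : (0:ℝ) < r^d := by positivity
      have h2 : r^d ≤ ((n:ℝ) * 6^d * ε^d) * r^d := by
        calc r^d ≤ (n:ℝ)*(6*(ε*r))^d := hr_d
          _ = ((n:ℝ) * 6^d * ε^d) * r^d := by rw [mul_pow, mul_pow]; ring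
      nlinarith
    -- combine
    have hdiv : r/(ε*r) = ε⁻¹ := by
      field_simp
    rw [hdiv] at hn
    have hinv : ε⁻¹ ^ s = ε ^ (-s) := by
      rw [Real.inv_rpow hε0.le, ← Real.rpow_neg hε0.le]
    rw [hinv] at hn
    have key : (1:ℝ) ≤ C * 6^d * ε ^ t := by
      have h3 : (n:ℝ) * 6^d * ε^d ≤ (C * ε ^ (-s)) * 6^d * ε^d := by
        have h6 : (0:ℝ) ≤ 6^d * ε^d := by positivity
        nlinarith [hn]
      have h4 : (C * ε ^ (-s)) * 6^d * ε^d = C * 6^d * ε ^ t := by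
        rw [← Real.rpow_natCast ε d,
          show (C * ε ^ (-s)) * 6^d * ε^((d:ℕ):ℝ) = C * 6^d * (ε^(-s) * ε^((d:ℕ):ℝ)) from by ring,
          ← Real.rpow_add hε0, show -s + ((d:ℕ):ℝ) = t from by rw [ht]; ring]
      linarith
    have hfin : C * 6^d * ε ^ t ≤ C * 6^d * B⁻¹ :=
      mul_le_mul_of_nonneg_left hεt (by positivity)
    have hBval : C * 6^d * B⁻¹ = 1/2 := by
      rw [hB]; field_simp
    linarith
  -- conclude
  have hrfl : assouadDim X = sInf A := rfl
  rw [hrfl]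
  exact le_antisymm (csInf_le ⟨(d:ℝ), hlb⟩ hmem) (le_csInf ⟨_, hmem⟩ hlb)

end
end

section
/- For Mandelbrot percolation in $\mathbb{R}^2$ with $N = 2$, a simple branching argument gives the lower bound $p_c > 2^{-1/2}$ on the critical probability for left-right crossing; more generally $p_c(N) > N^{-1/2}$ for all $N \geq 2$: if $p \leq N^{-1/2}$ then almost surely there is no connected component of $F$ joining the left and right sides of $[0,1]^2$. -/
open MeasureTheory ProbabilityTheory Filter

noncomputable section

abbrev Code (d N n : ℕ) := Fin n → Fin d → Fin N

def prefixCode {d N m n : ℕ} (h : m ≤ n) (c : Code d N n) : Code d N m :=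
  fun k => c (Fin.castLE h k)

def cubeBase {d N n : ℕ} (c : Code d N n) (j : Fin d) : ℝ :=
  ∑ k : Fin n, (c k j : ℝ) / (N : ℝ) ^ (k.1 + 1)

/-- The geometric level-`n` subcube of `[0,1]^d` coded by `c`. -/
def cube {d N : ℕ} (n : ℕ) (c : Code d N n) : Set (Fin d → ℝ) :=
  {x | ∀ j, cubeBase c j ≤ x j ∧ x j ≤ cubeBase c j + (1 / (N : ℝ)) ^ n}

/-- Fractal (Mandelbrot) percolation: each level-`n` cube carries an independent
Bernoulli retention variable with parameter `p n`. -/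
structure Perc (d N : ℕ) {Ω : Type} [MeasurableSpace Ω] (μ : Measure Ω) (p : ℕ → ℝ) where
  Y : (Σ n : ℕ, Code d N n) → Ω → Bool
  meas : ∀ i, Measurable (Y i)
  root : ∀ c ω, Y ⟨0, c⟩ ω = true
  dist : ∀ (n : ℕ) (c : Code d N (n + 1)),
    μ {ω | Y ⟨n + 1, c⟩ ω = true} = ENNReal.ofReal (p (n + 1))
  indep : iIndepFun Y μ

variable {d N : ℕ} {Ω : Type} [MeasurableSpace Ω] {μ : Measure Ω} {p : ℕ → ℝ}

/-- A level-`n` cube survives if it and all its ancestors are retained. -/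
def Perc.kept (P : Perc d N μ p) (n : ℕ) (c : Code d N n) (ω : Ω) : Prop :=
  ∀ m (h : m ≤ n), P.Y ⟨m, prefixCode h c⟩ ω = true

def Perc.level (P : Perc d N μ p) (n : ℕ) (ω : Ω) : Set (Fin d → ℝ) :=
  ⋃ c ∈ {c : Code d N n | P.kept n c ω}, cube n c

def Perc.limitSet (P : Perc d N μ p) (ω : Ω) : Set (Fin d → ℝ) :=
  ⋂ n, P.level n ω


open scoped ENNReal NNReal

namespace NoCross


/-- value of a digit string, most significant first -/
def dval {N n : ℕ} (f : Fin n → Fin N) : ℕ :=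
  ∑ k : Fin n, (f k).1 * N ^ (n - 1 - k.1)

variable {N : ℕ}

lemma dval_succ {n : ℕ} (f : Fin (n+1) → Fin N) :
    dval f = (f 0).1 * N ^ n + dval (Fin.tail f) := by
  rw [dval, Fin.sum_univ_succ, dval]
  congr 1
  apply Finset.sum_congr rfl
  intro k _
  show (f k.succ).1 * N ^ (n - (k.1 + 1)) = (Fin.tail f k).1 * N ^ (n - 1 - k.1)
  have h : n - (k.1 + 1) = n - 1 - k.1 := by omega
  rw [h]
  rfl

lemma dval_lt (hN : 0 < N) : ∀ {n : ℕ} (f : Fin n → Fin N), dval f < N ^ n := by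
  obtain ⟨M, rfl⟩ : ∃ M, N = M + 1 := ⟨N - 1, by omega⟩
  intro n
  induction n with
  | zero => intro f; simp [dval]
  | succ n ih =>
      intro f
      rw [dval_succ]
      have h1 : (f 0).1 ≤ M := by have := (f 0).2; omega
      have h2 := ih (Fin.tail f)
      have h3 : (f 0).1 * (M+1) ^ n ≤ M * (M+1) ^ n := Nat.mul_le_mul_right _ h1
      have h4 : (M+1) ^ (n+1) = M * (M+1)^n + (M+1)^n := by
        rw [pow_succ, mul_comm ((M+1)^n) (M+1), Nat.succ_mul]
      omega

lemma dval_inj (hN : 0 < N) {n : ℕ} (f g : Fin n → Fin N) (h : dval f = dval g) : f = g := by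
  induction n with
  | zero => funext k; exact absurd k.2 (by omega)
  | succ n ih =>
      rw [dval_succ, dval_succ] at h
      have hf := dval_lt hN (Fin.tail f)
      have hg := dval_lt hN (Fin.tail g)
      have h0 : (f 0).1 = (g 0).1 := by
        by_contra hne
        rcases Nat.lt_or_ge (f 0).1 (g 0).1 with hl | hl
        · have : ((f 0).1 + 1) * N ^ n ≤ (g 0).1 * N^n := Nat.mul_le_mul_right _ (by omega)
          rw [add_mul, one_mul] at this; omega
        · have hl' : (g 0).1 < (f 0).1 := by omega
          have : ((g 0).1 + 1) * N ^ n ≤ (f 0).1 * N^n := Nat.mul_le_mul_right _ (by omega)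
          rw [add_mul, one_mul] at this; omega
      have h0' : f 0 = g 0 := Fin.ext h0
      have ht : Fin.tail f = Fin.tail g := by
        apply ih; rw [h0] at h; omega
      funext k
      rcases Fin.eq_zero_or_eq_succ k with rfl | ⟨j, rfl⟩
      · exact h0'
      · exact congrFun ht j

lemma dval_eq_zero {n : ℕ} (f : Fin n → Fin N) (h : dval f = 0) (k : Fin n) : (f k).1 = 0 := by
  rw [dval] at h
  have := Finset.sum_eq_zero_iff.mp h k (Finset.mem_univ k)
  have hp : 0 < N ^ (n - 1 - k.1) := Nat.pow_pos (by have := (f k).2; omega)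
  rcases Nat.mul_eq_zero.mp this with h' | h'
  · exact h'
  · omega

lemma dval_eq_max (hN : 0 < N) : ∀ {n : ℕ} (f : Fin n → Fin N),
    dval f = N ^ n - 1 → ∀ k : Fin n, (f k).1 = N - 1 := by
  obtain ⟨M, rfl⟩ : ∃ M, N = M + 1 := ⟨N - 1, by omega⟩
  intro n
  induction n with
  | zero => intro f _ k; exact absurd k.2 (by omega)
  | succ n ih =>
      intro f h k
      rw [dval_succ] at h
      have hf := dval_lt hN (Fin.tail f)
      have hp : 0 < (M+1) ^ n := Nat.pow_pos (by omega)
      have hNn : (M+1) ^ (n+1) = M * (M+1)^n + (M+1)^n := by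
        rw [pow_succ, mul_comm ((M+1)^n) (M+1), Nat.succ_mul]
      have h0 : (f 0).1 = M := by
        by_contra hne
        have h1 : (f 0).1 + 1 ≤ M := by have := (f 0).2; omega
        have h2 : ((f 0).1 + 1) * (M+1) ^ n ≤ M * (M+1)^n := Nat.mul_le_mul_right _ h1
        rw [add_mul, one_mul] at h2
        omega
      have ht : dval (Fin.tail f) = (M+1) ^ n - 1 := by rw [h0] at h; omega
      rcases Fin.eq_zero_or_eq_succ k with rfl | ⟨j, rfl⟩
      · simpa using h0
      · simpa [Fin.tail] using ih (Fin.tail f) ht j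

/-- identification of the digits just left of the dividing line -/
lemma dval_eq_predH (hN : 0 < N) {n : ℕ} (f : Fin (n+1) → Fin N) (h : dval f = N ^ n - 1) :
    (f 0).1 = 0 ∧ ∀ k : Fin (n+1), k.1 ≠ 0 → (f k).1 = N - 1 := by
  rw [dval_succ] at h
  have hf := dval_lt hN (Fin.tail f)
  have hp : 0 < N ^ n := Nat.pow_pos hN
  have h0 : (f 0).1 = 0 := by
    by_contra hne
    have h2 : 1 * N ^ n ≤ (f 0).1 * N ^ n := Nat.mul_le_mul_right _ (by omega)
    rw [one_mul] at h2
    omega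
  refine ⟨h0, fun k hk => ?_⟩
  have ht : dval (Fin.tail f) = N ^ n - 1 := by rw [h0] at h; omega
  rcases Fin.eq_zero_or_eq_succ k with rfl | ⟨j, rfl⟩
  · simp at hk
  · exact dval_eq_max hN (Fin.tail f) ht j

lemma dval_eq_H (hN : 0 < N) {n : ℕ} (f : Fin (n+1) → Fin N) (h : dval f = N ^ n) :
    (f 0).1 = 1 ∧ ∀ k : Fin (n+1), k.1 ≠ 0 → (f k).1 = 0 := by
  rw [dval_succ] at h
  have hf := dval_lt hN (Fin.tail f)
  have hp : 0 < N ^ n := Nat.pow_pos hN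
  have h0 : (f 0).1 = 1 := by
    by_contra hne
    rcases Nat.lt_or_ge (f 0).1 1 with h1 | h1
    · have : (f 0).1 = 0 := by omega
      rw [this] at h
      omega
    · have h2 : 2 * N ^ n ≤ (f 0).1 * N ^ n := Nat.mul_le_mul_right _ (by omega)
      omega
  refine ⟨h0, fun k hk => ?_⟩
  have ht : dval (Fin.tail f) = 0 := by rw [h0] at h; omega
  rcases Fin.eq_zero_or_eq_succ k with rfl | ⟨j, rfl⟩
  · simp at hk
  · exact dval_eq_zero (Fin.tail f) ht j



lemma cubeBase_eq (hN : 0 < N) {n : ℕ} (c : Code d N n) (j : Fin d) :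
    cubeBase c j = (dval (fun k => c k j) : ℝ) / (N : ℝ) ^ n := by
  have hNr : (0:ℝ) < N := by exact_mod_cast hN
  rw [cubeBase, dval]
  push_cast
  rw [Finset.sum_div]
  apply Finset.sum_congr rfl
  intro k _
  have hk : k.1 < n := k.2
  rw [div_eq_div_iff (by positivity) (by positivity)]
  rw [mul_assoc, ← pow_add]
  congr 2
  omega

lemma isClosed_cube {n : ℕ} (c : Code d N n) : IsClosed (cube n c) := by
  have h : cube n c = ⋂ j, (fun x : Fin d → ℝ => x j) ⁻¹'
      (Set.Icc (cubeBase c j) (cubeBase c j + (1 / (N:ℝ)) ^ n)) := by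
    ext x
    simp [cube, Set.mem_iInter, Set.mem_Icc]
  rw [h]
  exact isClosed_iInter fun j => IsClosed.preimage (continuous_apply j) isClosed_Icc

lemma cubeBase_prefix_succ {n : ℕ} (c : Code d N (n+1)) (j : Fin d) :
    cubeBase c j = cubeBase (prefixCode (Nat.le_succ n) c) j
      + (c (Fin.last n) j : ℝ) / (N : ℝ) ^ (n + 1) := by
  rw [cubeBase, Fin.sum_univ_castSucc, cubeBase]
  rfl

lemma cube_subset_prefix (hN : 0 < N) {n : ℕ} (c : Code d N (n+1)) :
    cube (n+1) c ⊆ cube n (prefixCode (Nat.le_succ n) c) := by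
  intro x hx j
  have h1 := hx j
  have hb := cubeBase_prefix_succ c j
  have hNr : (0:ℝ) < N := by exact_mod_cast hN
  have he0 : 0 ≤ (c (Fin.last n) j : ℝ) / (N:ℝ) ^ (n+1) := by positivity
  have he1 : (c (Fin.last n) j : ℝ) ≤ (N:ℝ) - 1 := by
    have h := (c (Fin.last n) j).2
    have h' : ((c (Fin.last n) j : ℕ) : ℝ) + 1 ≤ (N : ℝ) := by exact_mod_cast h
    linarith
  have hlen : ((N:ℝ) - 1) / (N:ℝ)^(n+1) + (1/(N:ℝ))^(n+1) = (1/(N:ℝ))^n := by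
    rw [one_div_pow, one_div_pow]
    field_simp
    ring
  have he2 : (c (Fin.last n) j : ℝ)/(N:ℝ)^(n+1) ≤ ((N:ℝ)-1)/(N:ℝ)^(n+1) := by gcongr
  constructor
  · linarith [h1.1]
  · linarith [h1.2]

lemma dval_near (hN : 0 < N) {n : ℕ} {c c' : Code d N n} (j : Fin d)
    (h : (cube n c ∩ cube n c').Nonempty) :
    dval (fun k => c k j) ≤ dval (fun k => c' k j) + 1 := by
  obtain ⟨z, hz, hz'⟩ := h
  have hNr : (0:ℝ) < N := by exact_mod_cast hN
  have hpow : (0:ℝ) < (N:ℝ)^n := by positivity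
  have h1 := (hz j).1
  have h2 := (hz' j).2
  rw [cubeBase_eq hN] at h1 h2
  rw [one_div_pow] at h2
  have hr : (dval (fun k => c k j) : ℝ) ≤ (dval (fun k => c' k j) : ℝ) + 1 := by
    have := h1.trans h2
    rw [← add_div, div_le_div_iff₀ hpow hpow] at this
    have h3 := le_of_mul_le_mul_right this hpow
    linarith
  exact_mod_cast hr

lemma dval_of_left (hN : 0 < N) {n : ℕ} {c : Code d N n} {x : Fin d → ℝ} (hx : x ∈ cube n c)
    (j : Fin d) (h0 : x j = 0) : dval (fun k => c k j) = 0 := by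
  have hNr : (0:ℝ) < N := by exact_mod_cast hN
  have hpow : (0:ℝ) < (N:ℝ)^n := by positivity
  have h1 := (hx j).1
  rw [cubeBase_eq hN, h0] at h1
  have h2 : (dval (fun k => c k j) : ℝ) ≤ 0 := by
    by_contra hc
    push_neg at hc
    have := div_pos hc hpow
    linarith
  have : (dval (fun k => c k j) : ℝ) = 0 := le_antisymm h2 (by positivity)
  exact_mod_cast this

lemma dval_of_right (hN : 0 < N) {n : ℕ} {c : Code d N n} {x : Fin d → ℝ} (hx : x ∈ cube n c)
    (j : Fin d) (h0 : x j = 1) : dval (fun k => c k j) = N ^ n - 1 := by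
  have hNr : (0:ℝ) < N := by exact_mod_cast hN
  have hpow : (0:ℝ) < (N:ℝ)^n := by positivity
  have h1 := (hx j).2
  rw [cubeBase_eq hN, h0, one_div_pow] at h1
  have h2 : ((N:ℝ)^n : ℝ) ≤ (dval (fun k => c k j) : ℝ) + 1 := by
    rw [← add_div] at h1
    rw [le_div_iff₀ hpow] at h1
    linarith
  have h3 : (N:ℕ)^n ≤ dval (fun k => c k j) + 1 := by exact_mod_cast h2
  have h4 := dval_lt hN (fun k => c k j)
  omega


section Chain

/-- adjacency of kept cubes -/
def stepRel (P : Perc d N μ p) (n : ℕ) (ω : Ω) (c c' : Code d N n) : Prop :=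
  P.kept n c ω ∧ P.kept n c' ω ∧ (cube n c ∩ cube n c').Nonempty

lemma exists_chain (P : Perc d N μ p) (n : ℕ) (ω : Ω) {C : Set (Fin d → ℝ)}
    (hC : IsPreconnected C) (hCl : C ⊆ P.level n ω) {x y : Fin d → ℝ}
    (hx : x ∈ C) (hy : y ∈ C) :
    ∃ c₀ c₁ : Code d N n, x ∈ cube n c₀ ∧ y ∈ cube n c₁ ∧ P.kept n c₀ ω ∧
      Relation.ReflTransGen (stepRel P n ω) c₀ c₁ := by
  have hmem : ∀ z ∈ C, ∃ c, P.kept n c ω ∧ z ∈ cube n c := by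
    intro z hz
    have := hCl hz
    rw [Perc.level] at this
    simpa using this
  obtain ⟨c₀, hc₀k, hxc⟩ := hmem x hx
  set R : Set (Code d N n) :=
    {c | P.kept n c ω ∧ Relation.ReflTransGen (stepRel P n ω) c₀ c} with hR
  set A : Set (Fin d → ℝ) := ⋃ c ∈ R, cube n c with hA
  set B : Set (Fin d → ℝ) := ⋃ c ∈ {c | P.kept n c ω ∧ c ∉ R}, cube n c with hB
  have hA_closed : IsClosed A :=
    (Set.toFinite R).isClosed_biUnion (fun c _ => isClosed_cube c)
  have hB_closed : IsClosed B :=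
    (Set.toFinite _).isClosed_biUnion (fun c _ => isClosed_cube c)
  have hdisj : ∀ z, z ∈ A → z ∈ B → False := by
    intro z hzA hzB
    rw [hA, Set.mem_iUnion₂] at hzA
    rw [hB, Set.mem_iUnion₂] at hzB
    obtain ⟨c, hcR, hzc⟩ := hzA
    obtain ⟨c', hc', hzc'⟩ := hzB
    apply hc'.2
    refine ⟨hc'.1, hcR.2.tail ?_⟩
    exact ⟨hcR.1, hc'.1, ⟨z, hzc, hzc'⟩⟩
  have hcover : ∀ z ∈ C, z ∈ A ∪ B := by
    intro z hz
    obtain ⟨c, hck, hzc⟩ := hmem z hz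
    by_cases hcR : c ∈ R
    · exact Or.inl (Set.mem_biUnion hcR hzc)
    · exact Or.inr (Set.mem_biUnion ⟨hck, hcR⟩ hzc)
  have hxA : x ∈ A := Set.mem_biUnion ⟨hc₀k, Relation.ReflTransGen.refl⟩ hxc
  have hCA : C ⊆ A := by
    by_contra hnot
    obtain ⟨z, hzC, hzA⟩ : ∃ z, z ∈ C ∧ z ∉ A := by
      rw [Set.not_subset] at hnot; exact hnot
    have := hC Bᶜ Aᶜ hB_closed.isOpen_compl hA_closed.isOpen_compl
      (by
        intro w hw
        rcases hcover w hw with h | h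
        · exact Or.inl (fun hB' => hdisj w h hB')
        · exact Or.inr (fun hA' => hdisj w hA' h))
      ⟨x, hx, fun hB' => hdisj x hxA hB'⟩
      ⟨z, hzC, hzA⟩
    obtain ⟨w, hwC, hwB, hwA⟩ := this
    rcases hcover w hwC with h | h
    · exact hwA h
    · exact hwB h
  have hyA : y ∈ A := hCA hy
  rw [hA, Set.mem_iUnion₂] at hyA
  obtain ⟨c₁, hc₁, hyc⟩ := hyA
  exact ⟨c₀, c₁, hxc, hyc, hc₀k, hc₁.2⟩

lemma chain_cross (hN : 0 < N) {P : Perc d N μ p} {n : ℕ} {ω : Ω} (j : Fin d)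
    {a b : Code d N n}
    (hab : Relation.ReflTransGen (stepRel P n ω) a b) {H : ℕ}
    (ha : dval (fun k => a k j) < H) (hb : H ≤ dval (fun k => b k j)) :
    ∃ c c', stepRel P n ω c c' ∧ dval (fun k => c k j) + 1 = H ∧
      dval (fun k => c' k j) = H := by
  induction hab with
  | refl => omega
  | @tail m b' hab hstep ih =>
      by_cases hc : H ≤ dval (fun k => m k j)
      · exact ih hc
      · push_neg at hc
        have hnear : dval (fun k => b' k j) ≤ dval (fun k => m k j) + 1 := by
          apply dval_near hN j
          rw [Set.inter_comm]
          exact hstep.2.2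
        exact ⟨m, b', hstep, by omega, by omega⟩

end Chain

section Pairs

open scoped Classical


/-- x-digits of the column immediately left of the line x = 1/N, at level n+1 -/
def mkL (hN2 : 2 ≤ N) {n : ℕ} (b : Fin (n+1) → Fin N) : Code 2 N (n+1) :=
  fun k j => if j.1 = 0 then (if k.1 = 0 then ⟨0, by omega⟩ else ⟨N - 1, by omega⟩) else b k

/-- x-digits of the column immediately right of the line x = 1/N, at level n+1 -/
def mkR (hN2 : 2 ≤ N) {n : ℕ} (b : Fin (n+1) → Fin N) : Code 2 N (n+1) :=
  fun k j => if j.1 = 0 then (if k.1 = 0 then ⟨1, by omega⟩ else ⟨0, by omega⟩) else b k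

def pairAlive (P : Perc 2 N μ p) (hN2 : 2 ≤ N) (n : ℕ)
    (bb : (Fin (n+1) → Fin N) × (Fin (n+1) → Fin N)) (ω : Ω) : Prop :=
  P.kept (n+1) (mkL hN2 bb.1) ω ∧ P.kept (n+1) (mkR hN2 bb.2) ω ∧
    (cube (n+1) (mkL hN2 bb.1) ∩ cube (n+1) (mkR hN2 bb.2)).Nonempty

/-- number of straddling alive pairs at level n+1 -/
def Znum (P : Perc 2 N μ p) (hN2 : 2 ≤ N) (n : ℕ) (ω : Ω) : ℕ :=
  (Finset.univ.filter fun bb : (Fin (n+1) → Fin N) × (Fin (n+1) → Fin N) =>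
    pairAlive P hN2 n bb ω).card

lemma Znum_pos_iff (hN2 : 2 ≤ N) {P : Perc 2 N μ p} {n : ℕ} {ω : Ω} :
    1 ≤ Znum P hN2 n ω ↔ ∃ bb, pairAlive P hN2 n bb ω := by
  rw [Znum, Nat.succ_le_iff, Finset.card_pos]
  constructor
  · rintro ⟨bb, hbb⟩
    exact ⟨bb, (Finset.mem_filter.mp hbb).2⟩
  · rintro ⟨bb, hbb⟩
    exact ⟨bb, Finset.mem_filter.mpr ⟨Finset.mem_univ _, hbb⟩⟩

/-- a preconnected crossing set forces a straddling alive pair at each level -/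
lemma cross_gives_pair (hN2 : 2 ≤ N) (P : Perc 2 N μ p) (n : ℕ) (ω : Ω)
    {C : Set (Fin 2 → ℝ)} (hC : IsPreconnected C) (hCsub : C ⊆ P.level (n+1) ω)
    {x y : Fin 2 → ℝ} (hx : x ∈ C) (hy : y ∈ C)
    (hx0 : x 0 = 0) (hy0 : y 0 = 1) : 1 ≤ Znum P hN2 n ω := by
  have hN : 0 < N := by omega
  obtain ⟨c₀, c₁, hxc, hyc, hc₀k, hrtg⟩ := exists_chain P (n+1) ω hC hCsub hx hy
  have ha : dval (fun k => c₀ k 0) = 0 := dval_of_left hN hxc 0 hx0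
  have hb : dval (fun k => c₁ k 0) = N ^ (n+1) - 1 := dval_of_right hN hyc 0 hy0
  have hpow : 0 < N ^ n := Nat.pow_pos hN
  have hpow2 : N ^ n + N ^ n ≤ N ^ (n+1) := by
    have : 2 * N ^ n ≤ N * N ^ n := Nat.mul_le_mul_right _ hN2
    rw [pow_succ, mul_comm (N ^ n) N]
    omega
  obtain ⟨c, c', hstep, hcv, hcv'⟩ := chain_cross hN (0 : Fin 2) hrtg
    (H := N ^ n) (by omega) (by omega)
  have hcd := dval_eq_predH hN (fun k => c k 0) (by omega)
  have hcd' := dval_eq_H hN (fun k => c' k 0) hcv'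
  have hec : c = mkL hN2 (fun k => c k 1) := by
    funext k j
    rcases j with ⟨jv, hj⟩
    interval_cases jv
    · apply Fin.ext
      show (c k ⟨0, hj⟩).1 = _
      rw [mkL]
      by_cases hk : k.1 = 0
      · simp only [hk, if_true, if_pos rfl]
        have := hcd.1
        have hkk : k = 0 := Fin.ext hk
        rw [hkk] at *
        exact this
      · simp only [if_pos rfl, if_neg hk]
        exact hcd.2 k hk
    · show c k ⟨1, hj⟩ = _
      rw [mkL]
      simp
  have hec' : c' = mkR hN2 (fun k => c' k 1) := by
    funext k j
    rcases j with ⟨jv, hj⟩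
    interval_cases jv
    · apply Fin.ext
      show (c' k ⟨0, hj⟩).1 = _
      rw [mkR]
      by_cases hk : k.1 = 0
      · simp only [hk, if_true, if_pos rfl]
        have := hcd'.1
        have hkk : k = 0 := Fin.ext hk
        rw [hkk] at *
        exact this
      · simp only [if_pos rfl, if_neg hk]
        exact hcd'.2 k hk
    · show c' k ⟨1, hj⟩ = _
      rw [mkR]
      simp
  rw [Znum_pos_iff hN2]
  refine ⟨⟨fun k => c k 1, fun k => c' k 1⟩, ?_, ?_, ?_⟩
  · rw [← hec]; exact hstep.1
  · rw [← hec']; exact hstep.2.1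
  · rw [← hec, ← hec']; exact hstep.2.2

lemma kept_prefix {P : Perc d N μ p} {n : ℕ} {c : Code d N (n+1)} {ω : Ω}
    (h : P.kept (n+1) c ω) : P.kept n (prefixCode (Nat.le_succ n) c) ω := by
  intro m hm
  have h2 := h m (hm.trans (Nat.le_succ n))
  have : prefixCode hm (prefixCode (Nat.le_succ n) c) = prefixCode (hm.trans (Nat.le_succ n)) c := by
    funext k j
    rfl
  rw [this]
  exact h2

/-- y-prefix -/
def yPre {n : ℕ} (b : Fin (n+1+1) → Fin N) : Fin (n+1) → Fin N :=
  fun k => b (Fin.castLE (Nat.le_succ (n+1)) k)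

lemma mkL_prefix (hN2 : 2 ≤ N) {n : ℕ} (b : Fin (n+1+1) → Fin N) :
    prefixCode (Nat.le_succ (n+1)) (mkL hN2 b) = mkL hN2 (yPre b) := rfl

lemma mkR_prefix (hN2 : 2 ≤ N) {n : ℕ} (b : Fin (n+1+1) → Fin N) :
    prefixCode (Nat.le_succ (n+1)) (mkR hN2 b) = mkR hN2 (yPre b) := rfl

lemma pairAlive_prefix (hN2 : 2 ≤ N) {P : Perc 2 N μ p} {n : ℕ} {bb} {ω : Ω}
    (h : pairAlive P hN2 (n+1) bb ω) :
    pairAlive P hN2 n ⟨yPre bb.1, yPre bb.2⟩ ω := by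
  have hN : 0 < N := by omega
  obtain ⟨h1, h2, z, hz1, hz2⟩ := h
  refine ⟨?_, ?_, ?_⟩
  · have := kept_prefix h1
    rwa [mkL_prefix] at this
  · have := kept_prefix h2
    rwa [mkR_prefix] at this
  · refine ⟨z, ?_, ?_⟩
    · have := cube_subset_prefix hN (mkL hN2 bb.1) hz1
      rwa [mkL_prefix] at this
    · have := cube_subset_prefix hN (mkR hN2 bb.2) hz2
      rwa [mkR_prefix] at this

lemma Znum_mono (hN2 : 2 ≤ N) {P : Perc 2 N μ p} {n : ℕ} {ω : Ω}
    (h : 1 ≤ Znum P hN2 (n+1) ω) : 1 ≤ Znum P hN2 n ω := by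
  rw [Znum_pos_iff hN2] at h ⊢
  obtain ⟨bb, hbb⟩ := h
  exact ⟨_, pairAlive_prefix hN2 hbb⟩

lemma Znum_mono_le (hN2 : 2 ≤ N) {P : Perc 2 N μ p} {ω : Ω} {m n : ℕ} (hmn : m ≤ n)
    (h : 1 ≤ Znum P hN2 n ω) : 1 ≤ Znum P hN2 m ω := by
  induction n with
  | zero => have : m = 0 := by omega
            rwa [this]
  | succ n ih =>
      rcases Nat.eq_or_lt_of_le hmn with rfl | hlt
      · exact h
      · exact ih (by omega) (Znum_mono hN2 h)

end Pairs

section Prob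

open scoped Classical

lemma measurableSet_kept (P : Perc d N μ p) (n : ℕ) (c : Code d N n) :
    MeasurableSet {ω | P.kept n c ω} := by
  have h : {ω | P.kept n c ω} = ⋂ m, ⋂ (h : m ≤ n), (P.Y ⟨m, prefixCode h c⟩) ⁻¹' {true} := by
    ext ω
    simp [Perc.kept, Set.mem_iInter]
  rw [h]
  exact MeasurableSet.iInter fun m => MeasurableSet.iInter fun hm =>
    (P.meas _) (measurableSet_singleton _)

lemma measurableSet_pairAlive (P : Perc 2 N μ p) (hN2 : 2 ≤ N) (n : ℕ) (bb) :
    MeasurableSet {ω | pairAlive P hN2 n bb ω} := by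
  have h : {ω | pairAlive P hN2 n bb ω} =
      ({ω | P.kept (n+1) (mkL hN2 bb.1) ω} ∩ {ω | P.kept (n+1) (mkR hN2 bb.2) ω}) ∩
      {ω | (cube (n+1) (mkL hN2 bb.1) ∩ cube (n+1) (mkR hN2 bb.2)).Nonempty} := by
    ext ω; simp [pairAlive]; tauto
  rw [h]
  refine MeasurableSet.inter ((measurableSet_kept P _ _).inter (measurableSet_kept P _ _)) ?_
  by_cases hne : (cube (n+1) (mkL hN2 bb.1) ∩ cube (n+1) (mkR hN2 bb.2)).Nonempty
  · have : {ω : Ω | (cube (n+1) (mkL hN2 bb.1) ∩ cube (n+1) (mkR hN2 bb.2)).Nonempty} = Set.univ := by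
      ext ω; simp [hne]
    rw [this]; exact MeasurableSet.univ
  · have : {ω : Ω | (cube (n+1) (mkL hN2 bb.1) ∩ cube (n+1) (mkR hN2 bb.2)).Nonempty} = ∅ := by
      ext ω; simp [hne]
    rw [this]; exact MeasurableSet.empty

lemma measurable_Znum (P : Perc 2 N μ p) (hN2 : 2 ≤ N) (n : ℕ) :
    Measurable (fun ω => Znum P hN2 n ω) := by
  have h : (fun ω => Znum P hN2 n ω) =
      (fun ω => ∑ bb : (Fin (n+1) → Fin N) × (Fin (n+1) → Fin N),
        if pairAlive P hN2 n bb ω then 1 else 0) := by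
    funext ω
    rw [Znum, Finset.card_filter]
  rw [h]
  exact Finset.measurable_sum _ fun bb _ =>
    Measurable.ite (measurableSet_pairAlive P hN2 n bb) measurable_const measurable_const

section Marginal

variable {q : ℝ}

/-- the event that a single retention variable is on has probability q -/
lemma meas_Y_true (P : Perc d N μ p) (hpq : ∀ n, p (n+1) = q) (m : ℕ) (c : Code d N (m+1)) :
    μ ((P.Y ⟨m+1, c⟩) ⁻¹' {true}) = ENNReal.ofReal q := by
  have h := P.dist m c
  have h2 : {ω | P.Y ⟨m+1, c⟩ ω = true} = (P.Y ⟨m+1, c⟩) ⁻¹' {true} := rfl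
  rw [← h2, h, hpq]

lemma meas_Y_false [IsProbabilityMeasure μ] (P : Perc d N μ p) (hpq : ∀ n, p (n+1) = q)
    (m : ℕ) (c : Code d N (m+1)) :
    μ ((P.Y ⟨m+1, c⟩) ⁻¹' {false}) = 1 - ENNReal.ofReal q := by
  have h1 : (P.Y ⟨m+1, c⟩) ⁻¹' {false} = ((P.Y ⟨m+1, c⟩) ⁻¹' {true})ᶜ := by
    ext ω
    simp
  rw [h1, measure_compl ((P.meas _) (measurableSet_singleton _)) (measure_ne_top μ _),
    meas_Y_true P hpq, measure_univ]

/-- index of the level-(m+1) ancestor -/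
def ancIdx {n : ℕ} (c : Code d N (n+1)) (m : ℕ) : Σ t, Code d N t :=
  if h : m + 1 ≤ n + 1 then ⟨m+1, prefixCode h c⟩ else ⟨0, Fin.elim0⟩

lemma ancIdx_of_le {n : ℕ} (c : Code d N (n+1)) {m : ℕ} (h : m + 1 ≤ n + 1) :
    ancIdx c m = ⟨m+1, prefixCode h c⟩ := dif_pos h

lemma meas_pairAlive_le [IsProbabilityMeasure μ] (P : Perc 2 N μ p) (hN2 : 2 ≤ N)
    (hpq : ∀ n, p (n+1) = q) (n : ℕ) (bb) :
    μ {ω | pairAlive P hN2 n bb ω} ≤ ENNReal.ofReal q ^ (2*(n+1)) := by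
  set cL := mkL (n := n) hN2 bb.1 with hcL
  set cR := mkR (n := n) hN2 bb.2 with hcR
  set TL : Finset (Σ t, Code 2 N t) := (Finset.range (n+1)).image (ancIdx cL) with hTL
  set TR : Finset (Σ t, Code 2 N t) := (Finset.range (n+1)).image (ancIdx cR) with hTR
  have hinjL : ∀ (c : Code 2 N (n+1)), Set.InjOn (ancIdx c) (Finset.range (n+1)) := by
    intro c m hm m' hm' heq
    simp only [Finset.coe_range, Set.mem_Iio] at hm hm'
    rw [ancIdx_of_le c (by omega), ancIdx_of_le c (by omega)] at heq
    have := congrArg Sigma.fst heq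
    simpa using this
  have hdisj : Disjoint TL TR := by
    rw [Finset.disjoint_left]
    rintro i hi hi'
    simp only [hTL, hTR, Finset.mem_image, Finset.mem_range] at hi hi'
    obtain ⟨m, hm, rfl⟩ := hi
    obtain ⟨m', hm', heq⟩ := hi'
    rw [ancIdx_of_le cR (by omega), ancIdx_of_le cL (by omega)] at heq
    have hfst : m' + 1 = m + 1 := congrArg Sigma.fst heq
    have hm2x : m = m' := by omega
    subst hm2x
    have hsnd : prefixCode (by omega : m+1 ≤ n+1) cR = prefixCode (by omega : m+1 ≤ n+1) cL := by
      have := Sigma.mk.inj_iff.mp heq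
      exact eq_of_heq this.2
    have h0 : (prefixCode (by omega : m+1 ≤ n+1) cR ⟨0, by omega⟩ ⟨0, by omega⟩).1
        = (prefixCode (by omega : m+1 ≤ n+1) cL ⟨0, by omega⟩ ⟨0, by omega⟩).1 := by
      rw [hsnd]
    have hL : (prefixCode (by omega : m+1 ≤ n+1) cL ⟨0, by omega⟩ ⟨0, by omega⟩).1 = 0 := by
      simp [prefixCode, hcL, mkL, Fin.castLE]
    have hR : (prefixCode (by omega : m+1 ≤ n+1) cR ⟨0, by omega⟩ ⟨0, by omega⟩).1 = 1 := by
      simp [prefixCode, hcR, mkR, Fin.castLE]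
    omega
  have hsub : {ω | pairAlive P hN2 n bb ω} ⊆ ⋂ i ∈ TL ∪ TR, (P.Y i) ⁻¹' {true} := by
    intro ω hω
    simp only [Set.mem_iInter]
    intro i hi
    rcases Finset.mem_union.mp hi with h | h
    · simp only [hTL, Finset.mem_image, Finset.mem_range] at h
      obtain ⟨m, hm, rfl⟩ := h
      rw [ancIdx_of_le cL (by omega)]
      exact hω.1 (m+1) (by omega)
    · simp only [hTR, Finset.mem_image, Finset.mem_range] at h
      obtain ⟨m, hm, rfl⟩ := h
      rw [ancIdx_of_le cR (by omega)]
      exact hω.2.1 (m+1) (by omega)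
  have hprod : μ (⋂ i ∈ TL ∪ TR, (P.Y i) ⁻¹' {true}) =
      ∏ i ∈ TL ∪ TR, μ ((P.Y i) ⁻¹' {true}) := by
    apply P.indep.meas_biInter
    intro i _
    exact ⟨{true}, measurableSet_singleton _, rfl⟩
  have hmem_level : ∀ i ∈ TL ∪ TR, ∃ (m : ℕ) (c' : Code 2 N (m+1)), i = ⟨m+1, c'⟩ := by
    intro i hi
    rcases Finset.mem_union.mp hi with h | h <;>
    · simp only [hTL, hTR, Finset.mem_image, Finset.mem_range] at h
      obtain ⟨m, hm, rfl⟩ := h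
      rw [ancIdx_of_le _ (by omega)]
      exact ⟨m, _, rfl⟩
  have hfac : ∏ i ∈ TL ∪ TR, μ ((P.Y i) ⁻¹' {true}) = ENNReal.ofReal q ^ (TL ∪ TR).card := by
    rw [Finset.prod_congr rfl (g := fun _ => ENNReal.ofReal q), Finset.prod_const]
    intro i hi
    obtain ⟨m, c', rfl⟩ := hmem_level i hi
    exact meas_Y_true P hpq m c'
  have hcard : (TL ∪ TR).card = 2 * (n+1) := by
    rw [Finset.card_union_of_disjoint hdisj]
    rw [hTL, hTR, Finset.card_image_of_injOn (hinjL cL), Finset.card_image_of_injOn (hinjL cR),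
      Finset.card_range]
    omega
  calc μ {ω | pairAlive P hN2 n bb ω} ≤ μ (⋂ i ∈ TL ∪ TR, (P.Y i) ⁻¹' {true}) :=
        measure_mono hsub
    _ = ENNReal.ofReal q ^ (2*(n+1)) := by rw [hprod, hfac, hcard]

end Marginal


section Expectation

variable {q : ℝ}

lemma ypart_mkL (hN2 : 2 ≤ N) {n : ℕ} (b : Fin (n+1) → Fin N) :
    (fun k => mkL hN2 b k ⟨1, by omega⟩) = b := by
  funext k
  simp [mkL]

lemma ypart_mkR (hN2 : 2 ≤ N) {n : ℕ} (b : Fin (n+1) → Fin N) :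
    (fun k => mkR hN2 b k ⟨1, by omega⟩) = b := by
  funext k
  simp [mkR]

lemma card_inter_le (hN2 : 2 ≤ N) (n : ℕ) :
    (Finset.univ.filter fun bb : (Fin (n+1) → Fin N) × (Fin (n+1) → Fin N) =>
      (cube (n+1) (mkL hN2 bb.1) ∩ cube (n+1) (mkR hN2 bb.2)).Nonempty).card
      ≤ 3 * N ^ (n+1) := by
  have hN : 0 < N := by omega
  have hnear : ∀ bb : (Fin (n+1) → Fin N) × (Fin (n+1) → Fin N),
      (cube (n+1) (mkL hN2 bb.1) ∩ cube (n+1) (mkR hN2 bb.2)).Nonempty →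
      dval bb.1 ≤ dval bb.2 + 1 ∧ dval bb.2 ≤ dval bb.1 + 1 := by
    intro bb hne
    constructor
    · have := dval_near hN (⟨1, by omega⟩ : Fin 2) hne
      rwa [ypart_mkL, ypart_mkR] at this
    · have := dval_near hN (⟨1, by omega⟩ : Fin 2) (by rwa [Set.inter_comm] at hne)
      rwa [ypart_mkL, ypart_mkR] at this
  have hinj : Set.InjOn (fun bb : (Fin (n+1) → Fin N) × (Fin (n+1) → Fin N) =>
      (bb.1, dval bb.2 + 1 - dval bb.1))
      (Finset.univ.filter fun bb : (Fin (n+1) → Fin N) × (Fin (n+1) → Fin N) =>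
        (cube (n+1) (mkL hN2 bb.1) ∩ cube (n+1) (mkR hN2 bb.2)).Nonempty) := by
    intro bb hbb bb' hbb' heq
    simp only [Finset.coe_filter, Set.mem_setOf_eq, Finset.mem_univ, true_and] at hbb hbb'
    have heq' : (bb.1, dval bb.2 + 1 - dval bb.1) = (bb'.1, dval bb'.2 + 1 - dval bb'.1) := heq
    injection heq' with h1 h2

    have hb := hnear bb hbb
    have hb' := hnear bb' hbb'
    have hd1 : dval bb.1 = dval bb'.1 := by rw [h1]
    have hd2 : dval bb.2 = dval bb'.2 := by omega
    have h3 : bb.2 = bb'.2 := dval_inj hN _ _ hd2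
    exact Prod.ext h1 h3
  have hmaps : ∀ bb ∈ (Finset.univ.filter fun bb : (Fin (n+1) → Fin N) × (Fin (n+1) → Fin N) =>
      (cube (n+1) (mkL hN2 bb.1) ∩ cube (n+1) (mkR hN2 bb.2)).Nonempty),
      (bb.1, dval bb.2 + 1 - dval bb.1) ∈
        (Finset.univ : Finset (Fin (n+1) → Fin N)) ×ˢ Finset.range 3 := by
    intro bb hbb
    simp only [Finset.mem_filter, Finset.mem_univ, true_and] at hbb
    have hb := hnear bb hbb
    rw [Finset.mem_product, Finset.mem_range]
    exact ⟨Finset.mem_univ _, by omega⟩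
  have hcard := Finset.card_le_card_of_injOn _ hmaps hinj
  calc (Finset.univ.filter fun bb : (Fin (n+1) → Fin N) × (Fin (n+1) → Fin N) =>
      (cube (n+1) (mkL hN2 bb.1) ∩ cube (n+1) (mkR hN2 bb.2)).Nonempty).card
      ≤ ((Finset.univ : Finset (Fin (n+1) → Fin N)) ×ˢ Finset.range 3).card := hcard
    _ = 3 * N ^ (n+1) := by
        rw [Finset.card_product, Finset.card_range, Finset.card_univ, Fintype.card_fun]
        simp [mul_comm]

lemma lint_Znum_le [IsProbabilityMeasure μ] (P : Perc 2 N μ p) (hN2 : 2 ≤ N)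
    (hpq : ∀ n, p (n+1) = q) (n : ℕ) :
    ∫⁻ ω, (Znum P hN2 n ω : ℝ≥0∞) ∂μ
      ≤ 3 * ((N : ℝ≥0∞) * ENNReal.ofReal q ^ 2) ^ (n+1) := by
  have hrepr : (fun ω => (Znum P hN2 n ω : ℝ≥0∞)) =
      fun ω => ∑ bb : (Fin (n+1) → Fin N) × (Fin (n+1) → Fin N),
        Set.indicator {ω' | pairAlive P hN2 n bb ω'} (1 : Ω → ℝ≥0∞) ω := by
    funext ω
    rw [Znum, Finset.card_filter, Nat.cast_sum]
    apply Finset.sum_congr rfl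
    intro bb _
    rw [Set.indicator_apply]
    by_cases h : pairAlive P hN2 n bb ω
    · simp [h, Set.mem_setOf_eq]
    · simp [h, Set.mem_setOf_eq]
  rw [hrepr]
  have hsum := MeasureTheory.lintegral_finset_sum (μ := μ)
    (s := (Finset.univ : Finset ((Fin (n+1) → Fin N) × (Fin (n+1) → Fin N))))
    (f := fun bb ω => Set.indicator {ω' | pairAlive P hN2 n bb ω'} (1 : Ω → ℝ≥0∞) ω)
    (fun bb _ => measurable_const.indicator (measurableSet_pairAlive P hN2 n bb))
  rw [hsum]
  have hterm : ∀ bb : (Fin (n+1) → Fin N) × (Fin (n+1) → Fin N),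
      ∫⁻ ω, Set.indicator {ω' | pairAlive P hN2 n bb ω'} (1 : Ω → ℝ≥0∞) ω ∂μ
        = μ {ω' | pairAlive P hN2 n bb ω'} := by
    intro bb
    rw [MeasureTheory.lintegral_indicator_one (measurableSet_pairAlive P hN2 n bb)]
  rw [Finset.sum_congr rfl (fun bb _ => hterm bb)]
  set s := (Finset.univ.filter fun bb : (Fin (n+1) → Fin N) × (Fin (n+1) → Fin N) =>
      (cube (n+1) (mkL hN2 bb.1) ∩ cube (n+1) (mkR hN2 bb.2)).Nonempty) with hs
  have hvanish : ∑ bb : (Fin (n+1) → Fin N) × (Fin (n+1) → Fin N),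
      μ {ω' | pairAlive P hN2 n bb ω'} = ∑ bb ∈ s, μ {ω' | pairAlive P hN2 n bb ω'} := by
    symm
    apply Finset.sum_subset (Finset.filter_subset _ _)
    intro bb _ hbb
    rw [Finset.mem_filter] at hbb
    push_neg at hbb
    have : {ω' | pairAlive P hN2 n bb ω'} = ∅ := by
      ext ω'
      simp only [Set.mem_setOf_eq, Set.mem_empty_iff_false, iff_false]
      intro hpa
      exact Set.not_nonempty_empty (hbb (Finset.mem_univ _) ▸ hpa.2.2)
    rw [this, measure_empty]
  rw [hvanish]
  have hbound : ∑ bb ∈ s, μ {ω' | pairAlive P hN2 n bb ω'}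
      ≤ s.card • (ENNReal.ofReal q ^ (2*(n+1))) :=
    Finset.sum_le_card_nsmul _ _ _ (fun bb _ => meas_pairAlive_le P hN2 hpq n bb)
  have hcard := card_inter_le hN2 n
  calc ∑ bb ∈ s, μ {ω' | pairAlive P hN2 n bb ω'}
      ≤ s.card • (ENNReal.ofReal q ^ (2*(n+1))) := hbound
    _ = (s.card : ℝ≥0∞) * ENNReal.ofReal q ^ (2*(n+1)) := by rw [nsmul_eq_mul]
    _ ≤ (3 * (N:ℝ≥0∞) ^ (n+1)) * ENNReal.ofReal q ^ (2*(n+1)) := by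
        apply mul_le_mul_left
        have : (s.card : ℝ≥0∞) ≤ ((3 * N ^ (n+1) : ℕ) : ℝ≥0∞) := by
          exact_mod_cast Nat.cast_le.mpr hcard
        calc (s.card : ℝ≥0∞) ≤ ((3 * N ^ (n+1) : ℕ) : ℝ≥0∞) := this
          _ = 3 * (N:ℝ≥0∞) ^ (n+1) := by push_cast; ring
    _ = 3 * ((N : ℝ≥0∞) * ENNReal.ofReal q ^ 2) ^ (n+1) := by
        rw [mul_pow, pow_mul]
        ring

lemma lint_Znum_le_three [IsProbabilityMeasure μ] (P : Perc 2 N μ p) (hN2 : 2 ≤ N)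
    (hpq : ∀ n, p (n+1) = q) (hNqE : (N : ℝ≥0∞) * ENNReal.ofReal q ^ 2 ≤ 1) (n : ℕ) :
    ∫⁻ ω, (Znum P hN2 n ω : ℝ≥0∞) ∂μ ≤ 3 := by
  calc ∫⁻ ω, (Znum P hN2 n ω : ℝ≥0∞) ∂μ
      ≤ 3 * ((N : ℝ≥0∞) * ENNReal.ofReal q ^ 2) ^ (n+1) := lint_Znum_le P hN2 hpq n
    _ ≤ 3 * 1 ^ (n+1) := by
        apply mul_le_mul_right
        exact pow_le_pow_left' hNqE _
    _ = 3 := by simp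

end Expectation


section DepHelpers

lemma measurableSet_pi_bool {ι : Type} [Finite ι] (s : Set (ι → Bool)) : MeasurableSet s := by
  have h1 : ∀ g : ι → Bool, MeasurableSet ({g} : Set (ι → Bool)) := by
    intro g
    have : ({g} : Set (ι → Bool)) = ⋂ i, (fun f : ι → Bool => f i) ⁻¹' {g i} := by
      ext f
      simp [funext_iff]
    rw [this]
    exact MeasurableSet.iInter fun i => (measurable_pi_apply i) (measurableSet_singleton _)
  have h2 : s = ⋃ g ∈ s, ({g} : Set (ι → Bool)) := by simp
  rw [h2]
  exact MeasurableSet.biUnion (Set.to_countable _) (fun g _ => h1 g)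

lemma kept_dep (P : Perc 2 N μ p) {n : ℕ} (c : Code 2 N n) {ω ω' : Ω}
    (hag : ∀ t (_ : t ≤ n) (c' : Code 2 N t), P.Y ⟨t, c'⟩ ω = P.Y ⟨t, c'⟩ ω') :
    P.kept n c ω ↔ P.kept n c ω' := by
  constructor <;> intro h t ht
  · rw [← hag t ht _]
    exact h t ht
  · rw [hag t ht _]
    exact h t ht

lemma pairAlive_dep (P : Perc 2 N μ p) (hN2 : 2 ≤ N) {t : ℕ} (bb) {ω ω' : Ω}
    (hag : ∀ s (_ : s ≤ t + 1) (c' : Code 2 N s), P.Y ⟨s, c'⟩ ω = P.Y ⟨s, c'⟩ ω') :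
    pairAlive P hN2 t bb ω ↔ pairAlive P hN2 t bb ω' := by
  unfold pairAlive
  rw [kept_dep P _ hag, kept_dep P _ hag]

lemma Znum_dep (P : Perc 2 N μ p) (hN2 : 2 ≤ N) {t : ℕ} {ω ω' : Ω}
    (hag : ∀ s (_ : s ≤ t + 1) (c' : Code 2 N s), P.Y ⟨s, c'⟩ ω = P.Y ⟨s, c'⟩ ω') :
    Znum P hN2 t ω = Znum P hN2 t ω' := by
  unfold Znum
  congr 1
  apply Finset.filter_congr
  intro bb _
  exact pairAlive_dep P hN2 bb hag

lemma prefixCode_rfl {n : ℕ} (c : Code d N n) : prefixCode (le_refl n) c = c := by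
  funext k j
  have : Fin.castLE (le_refl n) k = k := Fin.ext rfl
  rw [prefixCode, this]

lemma kept_self_true (P : Perc d N μ p) {n : ℕ} {c : Code d N n} {ω : Ω}
    (h : P.kept n c ω) : P.Y ⟨n, c⟩ ω = true := by
  have := h n (le_refl n)
  rwa [prefixCode_rfl] at this

end DepHelpers


section KeyStep

variable {q : ℝ}

def Slo (N m : ℕ) : Finset (Σ t, Code 2 N t) :=
  (Finset.range (m+2)).sigma (fun t => (Finset.univ : Finset (Code 2 N t)))

def Shi (N m : ℕ) : Finset (Σ t, Code 2 N t) :=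
  ({m+2} : Finset ℕ).sigma (fun t => (Finset.univ : Finset (Code 2 N t)))

lemma mem_Slo {N m : ℕ} {i : Σ t, Code 2 N t} : i ∈ Slo N m ↔ i.1 ≤ m + 1 := by
  rw [Slo, Finset.mem_sigma]
  simp only [Finset.mem_range, Finset.mem_univ, and_true]
  omega

lemma mem_Shi {N m : ℕ} {i : Σ t, Code 2 N t} : i ∈ Shi N m ↔ i.1 = m + 2 := by
  rw [Shi, Finset.mem_sigma]
  simp

lemma key_step [IsProbabilityMeasure μ] (P : Perc 2 N μ p) (hN2 : 2 ≤ N)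
    (hpq : ∀ n, p (n+1) = q) (K m : ℕ) (F : Set Ω)
    (hFdep : ∀ ω ω', (∀ t (_ : t ≤ m+1) (c : Code 2 N t), P.Y ⟨t, c⟩ ω = P.Y ⟨t, c⟩ ω') →
      ω ∈ F → ω' ∈ F)
    (hFlow : ∀ ω ∈ F, 1 ≤ Znum P hN2 m ω ∧ Znum P hN2 m ω ≤ K) :
    μ (F ∩ {ω | 1 ≤ Znum P hN2 (m+1) ω})
      ≤ (1 - (1 - ENNReal.ofReal q) ^ (N*K)) * μ F := by
  classical
  set qE := ENNReal.ofReal q with hqE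
  set δ := (1 - qE) ^ (N*K) with hδdef
  have hδ1 : δ ≤ 1 := by
    rw [hδdef]
    exact pow_le_one' tsub_le_self _
  set S : Set Ω := {ω | 1 ≤ Znum P hN2 (m+1) ω} with hSdef
  have hSmeas : MeasurableSet S := by
    have h : S = (fun ω => Znum P hN2 (m+1) ω) ⁻¹' {t | 1 ≤ t} := rfl
    rw [h]
    exact measurable_Znum P hN2 (m+1) trivial
  set Φ : Ω → ((i : Slo N m) → Bool) := fun a i => P.Y i a with hΦdef
  have hΦmeas : Measurable Φ := measurable_pi_lambda _ (fun i => P.meas i)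
  have hagree : ∀ ω ω', Φ ω = Φ ω' →
      ∀ t (_ : t ≤ m+1) (c : Code 2 N t), P.Y ⟨t, c⟩ ω = P.Y ⟨t, c⟩ ω' := by
    intro ω ω' hΦeq t ht c
    have hmem : (⟨t, c⟩ : Σ t, Code 2 N t) ∈ Slo N m := mem_Slo.mpr ht
    exact congrFun hΦeq ⟨⟨t, c⟩, hmem⟩
  set GF : Finset ((i : Slo N m) → Bool) := (Set.toFinite (Φ '' F)).toFinset with hGF
  have hmemGF : ∀ g, g ∈ GF ↔ ∃ ω₀ ∈ F, Φ ω₀ = g := by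
    intro g
    rw [hGF, Set.Finite.mem_toFinset]
    constructor
    · rintro ⟨ω₀, h1, h2⟩; exact ⟨ω₀, h1, h2⟩
    · rintro ⟨ω₀, h1, h2⟩; exact ⟨ω₀, h1, h2⟩
  have hFeq : F = ⋃ g ∈ GF, Φ ⁻¹' {g} := by
    ext ω
    constructor
    · intro hω
      exact Set.mem_biUnion ((hmemGF (Φ ω)).mpr ⟨ω, hω, rfl⟩) rfl
    · intro hω
      rw [Set.mem_iUnion₂] at hω
      obtain ⟨g, hg, hωg⟩ := hω
      obtain ⟨ω₀, hω₀F, hω₀g⟩ := (hmemGF g).mp hg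
      have hee : Φ ω₀ = Φ ω := by rw [hω₀g]; exact hωg.symm
      exact hFdep ω₀ ω (hagree _ _ hee) hω₀F
  have hpreMeas : ∀ g : ((i : Slo N m) → Bool), MeasurableSet (Φ ⁻¹' {g}) :=
    fun g => hΦmeas (measurableSet_pi_bool _)
  have hgbound : ∀ g ∈ GF, μ (Φ ⁻¹' {g} ∩ S) ≤ (1 - δ) * μ (Φ ⁻¹' {g}) := by
    intro g hg
    obtain ⟨ω₀, hω₀F, hω₀g⟩ := (hmemGF g).mp hg
    set Bset : Finset (Fin (m+1) → Fin N) :=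
      Finset.univ.filter (fun b => ∃ b', pairAlive P hN2 m (b, b') ω₀) with hBset
    have hBcard : Bset.card ≤ K := by
      have h2 := (hFlow ω₀ hω₀F).2
      have hle : Bset.card ≤ (Finset.univ.filter
          (fun bb : (Fin (m+1) → Fin N) × (Fin (m+1) → Fin N) =>
            pairAlive P hN2 m bb ω₀)).card := by
        apply Finset.card_le_card_of_injOn
          (fun b => (b, if h : ∃ b', pairAlive P hN2 m (b, b') ω₀ then Classical.choose h else b))
        · intro b hb
          rw [hBset, Finset.mem_coe, Finset.mem_filter] at hb
          obtain ⟨-, hex⟩ := hb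
          rw [Finset.mem_coe, Finset.mem_filter]
          refine ⟨Finset.mem_univ _, ?_⟩
          simp only [dif_pos hex]
          exact Classical.choose_spec hex
        · intro b _ b' _ heq
          have heq' : (b, if h : ∃ b2, pairAlive P hN2 m (b, b2) ω₀ then Classical.choose h else b)
            = (b', if h : ∃ b2, pairAlive P hN2 m (b', b2) ω₀ then Classical.choose h else b') := heq
          exact (Prod.ext_iff.mp heq').1
      rw [Znum] at h2
      omega
    set CH : Finset (Fin (m+2) → Fin N) :=
      Finset.univ.filter (fun b2 => yPre b2 ∈ Bset) with hCH
    have hCHcard : CH.card ≤ N * K := by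
      have hle : CH.card ≤ (Bset ×ˢ (Finset.univ : Finset (Fin N))).card := by
        apply Finset.card_le_card_of_injOn (fun b2 => (yPre b2, b2 (Fin.last (m+1))))
        · intro b2 hb2
          rw [hCH, Finset.mem_coe, Finset.mem_filter] at hb2
          rw [Finset.mem_coe, Finset.mem_product]
          exact ⟨hb2.2, Finset.mem_univ _⟩
        · intro b2 _ b2' _ heq
          have heq' : (yPre b2, b2 (Fin.last (m+1))) = (yPre b2', b2' (Fin.last (m+1))) := heq
          injection heq' with e1 e2
          funext k
          by_cases hk : k.1 < m + 1
          · have hkc : k = Fin.castLE (Nat.le_succ (m+1)) ⟨k.1, hk⟩ := Fin.ext rfl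
            rw [hkc]
            exact congrFun e1 ⟨k.1, hk⟩
          · have hkl : k = Fin.last (m+1) := by
              apply Fin.ext
              have hk2 := k.2
              simp only [Fin.val_last]
              omega
            rw [hkl]
            exact e2
      have hcp : (Bset ×ˢ (Finset.univ : Finset (Fin N))).card = Bset.card * N := by
        rw [Finset.card_product, Finset.card_univ, Fintype.card_fin]
      calc CH.card ≤ (Bset ×ˢ (Finset.univ : Finset (Fin N))).card := hle
        _ = Bset.card * N := hcp
        _ ≤ K * N := Nat.mul_le_mul_right _ hBcard
        _ = N * K := Nat.mul_comm _ _
    set D : Set Ω := ⋂ b2 ∈ CH, (P.Y ⟨m+2, mkL hN2 b2⟩) ⁻¹' {false} with hD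
    have hDmeas : MeasurableSet D := by
      rw [hD]
      exact MeasurableSet.biInter (Set.to_countable _)
        (fun b2 _ => (P.meas _) (measurableSet_singleton _))
    have hmkLinj : Set.InjOn (fun b2 : Fin (m+2) → Fin N =>
        (⟨m+2, mkL hN2 b2⟩ : Σ t, Code 2 N t)) CH := by
      intro a _ b _ heq
      have h2 : mkL hN2 a = mkL hN2 b := by
        have h3 := Sigma.mk.inj_iff.mp heq
        exact eq_of_heq h3.2
      have h4 := congrArg (fun c : Code 2 N (m+2) => fun k => c k (⟨1, by omega⟩ : Fin 2)) h2
      rwa [ypart_mkL, ypart_mkL] at h4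
    set CHidx : Finset (Σ t, Code 2 N t) := CH.image (fun b2 => ⟨m+2, mkL hN2 b2⟩) with hCHidx
    have hDeq : D = ⋂ i ∈ CHidx, (P.Y i) ⁻¹' {false} := by
      rw [hD, hCHidx]
      ext ω
      simp only [Set.mem_iInter, Finset.mem_image]
      constructor
      · rintro h i ⟨b2, hb2, rfl⟩
        exact h b2 hb2
      · intro h b2 hb2
        exact h _ ⟨b2, hb2, rfl⟩
    have hμD : μ D = (1 - qE) ^ CH.card := by
      rw [hDeq]
      rw [P.indep.meas_biInter (fun i _ => ⟨{false}, measurableSet_singleton _, rfl⟩)]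
      rw [Finset.prod_congr rfl (g := fun _ => 1 - qE) ?_, Finset.prod_const]
      · congr 1
        rw [hCHidx]
        exact Finset.card_image_of_injOn hmkLinj
      · intro i hi
        rw [hCHidx, Finset.mem_image] at hi
        obtain ⟨b2, _, rfl⟩ := hi
        exact meas_Y_false P hpq (m+1) (mkL hN2 b2)
    have hδle : δ ≤ μ D := by
      rw [hμD, hδdef]
      exact pow_le_pow_of_le_one (by simp) tsub_le_self hCHcard
    have hempty : Φ ⁻¹' {g} ∩ S ∩ D = ∅ := by
      ext ω
      simp only [Set.mem_inter_iff, Set.mem_empty_iff_false, iff_false, not_and]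
      intro hin hDω
      obtain ⟨hΦg, hS1⟩ := hin
      obtain ⟨bb2, hbb2⟩ := (Znum_pos_iff hN2).mp hS1
      have hpar := pairAlive_prefix hN2 hbb2
      have hee : Φ ω = Φ ω₀ := by
        have h5 : Φ ω = g := hΦg
        rw [h5, hω₀g]
      have hagg := hagree _ _ hee
      have hpar₀ : pairAlive P hN2 m (yPre bb2.1, yPre bb2.2) ω₀ :=
        (pairAlive_dep P hN2 _ hagg).mp hpar
      have hmemB : yPre bb2.1 ∈ Bset := by
        rw [hBset, Finset.mem_filter]
        exact ⟨Finset.mem_univ _, ⟨_, hpar₀⟩⟩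
      have hmemCH : bb2.1 ∈ CH := by
        rw [hCH, Finset.mem_filter]
        exact ⟨Finset.mem_univ _, hmemB⟩
      have hfalse : P.Y ⟨m+2, mkL hN2 bb2.1⟩ ω = false := by
        have h6 : ω ∈ D := hDω
        rw [hD] at h6
        simp only [Set.mem_iInter] at h6
        exact h6 bb2.1 hmemCH
      have htrue : P.Y ⟨m+2, mkL hN2 bb2.1⟩ ω = true := kept_self_true P hbb2.1
      rw [htrue] at hfalse
      simp at hfalse
    set Ψ : Ω → ((i : Shi N m) → Bool) := fun a i => P.Y i a with hΨ
    have hdisjST : Disjoint (Slo N m) (Shi N m) := by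
      rw [Finset.disjoint_left]
      intro i hi hi'
      rw [mem_Slo] at hi
      rw [mem_Shi] at hi'
      omega
    have hIF : IndepFun Φ Ψ μ := P.indep.indepFun_finset _ _ hdisjST P.meas
    set TD : Set ((i : Shi N m) → Bool) :=
      {h | ∀ b2 ∈ CH, h ⟨⟨m+2, mkL hN2 b2⟩, mem_Shi.mpr rfl⟩ = false} with hTD
    have hDpre : D = Ψ ⁻¹' TD := by
      rw [hD]
      ext ω
      simp only [Set.mem_iInter, Set.mem_preimage, hTD, Set.mem_setOf_eq]
      constructor
      · intro h b2 hb2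
        exact h b2 hb2
      · intro h b2 hb2
        exact h b2 hb2
    have hindep2 : μ (Φ ⁻¹' {g} ∩ D) = μ (Φ ⁻¹' {g}) * μ D := by
      rw [hDpre]
      exact hIF.measure_inter_preimage_eq_mul _ _ (measurableSet_pi_bool _)
        (measurableSet_pi_bool _)
    have hpreS : Φ ⁻¹' {g} ∩ S ⊆ Φ ⁻¹' {g} \ (Φ ⁻¹' {g} ∩ D) := by
      intro ω hω
      refine ⟨hω.1, ?_⟩
      intro hω'
      have h7 : ω ∈ Φ ⁻¹' {g} ∩ S ∩ D := ⟨hω, hω'.2⟩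
      rw [hempty] at h7
      exact h7
    have hμfin : μ (Φ ⁻¹' {g} ∩ D) ≠ ⊤ := measure_ne_top μ _
    calc μ (Φ ⁻¹' {g} ∩ S) ≤ μ (Φ ⁻¹' {g} \ (Φ ⁻¹' {g} ∩ D)) := measure_mono hpreS
      _ = μ (Φ ⁻¹' {g}) - μ (Φ ⁻¹' {g} ∩ D) :=
          measure_diff Set.inter_subset_left
            ((hpreMeas g).inter hDmeas).nullMeasurableSet hμfin
      _ = μ (Φ ⁻¹' {g}) - μ (Φ ⁻¹' {g}) * μ D := by rw [hindep2]
      _ ≤ μ (Φ ⁻¹' {g}) - μ (Φ ⁻¹' {g}) * δ := tsub_le_tsub_left (mul_le_mul_right hδle _) _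
      _ ≤ (1 - δ) * μ (Φ ⁻¹' {g}) := by
          rw [tsub_le_iff_right]
          have hfin : μ (Φ ⁻¹' {g}) = (1 - δ) * μ (Φ ⁻¹' {g}) + μ (Φ ⁻¹' {g}) * δ := by
            rw [mul_comm _ δ, ← add_mul, tsub_add_cancel_of_le hδ1, one_mul]
          exact le_of_eq hfin
  have hdisjPre : (GF : Set ((i : Slo N m) → Bool)).PairwiseDisjoint
      (fun g => Φ ⁻¹' {g}) := by
    intro g _ g' _ hne
    rw [Function.onFun, Set.disjoint_left]
    intro ω hω hω'
    exact hne (by rw [← hω, ← hω'])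
  calc μ (F ∩ S) = μ (⋃ g ∈ GF, (Φ ⁻¹' {g} ∩ S)) := by
        rw [hFeq, Set.iUnion₂_inter]
    _ ≤ ∑ g ∈ GF, μ (Φ ⁻¹' {g} ∩ S) := measure_biUnion_finset_le _ _
    _ ≤ ∑ g ∈ GF, (1 - δ) * μ (Φ ⁻¹' {g}) := Finset.sum_le_sum hgbound
    _ = (1 - δ) * ∑ g ∈ GF, μ (Φ ⁻¹' {g}) := by rw [Finset.mul_sum]
    _ = (1 - δ) * μ (⋃ g ∈ GF, Φ ⁻¹' {g}) := by
        rw [measure_biUnion_finset hdisjPre (fun g _ => hpreMeas g)]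
    _ = (1 - δ) * μ F := by rw [← hFeq]

end KeyStep


section Recursion

open scoped Classical

variable {q : ℝ}

def LowE (P : Perc 2 N μ p) (hN2 : 2 ≤ N) (K m : ℕ) : Set Ω :=
  {ω | 1 ≤ Znum P hN2 m ω ∧ Znum P hN2 m ω ≤ K}

def cnt (P : Perc 2 N μ p) (hN2 : 2 ≤ N) (K n : ℕ) (ω : Ω) : ℕ :=
  ((Finset.range n).filter (fun m => ω ∈ LowE P hN2 K m)).card

def Ei (P : Perc 2 N μ p) (hN2 : 2 ≤ N) (K j : ℕ) : Set Ω :=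
  {ω | ∃ m, j ≤ cnt P hN2 K (m+1) ω ∧ 1 ≤ Znum P hN2 (m+1) ω}

def Fi (P : Perc 2 N μ p) (hN2 : 2 ≤ N) (K j m : ℕ) : Set Ω :=
  {ω | ω ∈ LowE P hN2 K m ∧ cnt P hN2 K m ω = j - 1}

lemma cnt_succ (P : Perc 2 N μ p) (hN2 : 2 ≤ N) (K n : ℕ) (ω : Ω) :
    cnt P hN2 K (n+1) ω = cnt P hN2 K n ω + (if ω ∈ LowE P hN2 K n then 1 else 0) := by
  rw [cnt, cnt, Finset.range_add_one, Finset.filter_insert]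
  by_cases h : ω ∈ LowE P hN2 K n
  · rw [if_pos h, if_pos h, Finset.card_insert_of_notMem (by simp)]
  · rw [if_neg h, if_neg h, Nat.add_zero]

lemma cnt_mono (P : Perc 2 N μ p) (hN2 : 2 ≤ N) (K : ℕ) {m n : ℕ} (h : m ≤ n) (ω : Ω) :
    cnt P hN2 K m ω ≤ cnt P hN2 K n ω := by
  apply Finset.card_le_card
  apply Finset.filter_subset_filter
  intro t ht
  rw [Finset.mem_range] at ht ⊢
  omega

lemma cnt_le (P : Perc 2 N μ p) (hN2 : 2 ≤ N) (K n : ℕ) (ω : Ω) :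
    cnt P hN2 K n ω ≤ n := by
  calc cnt P hN2 K n ω ≤ (Finset.range n).card := Finset.card_filter_le _ _
    _ = n := Finset.card_range n

lemma Ei_subset (P : Perc 2 N μ p) (hN2 : 2 ≤ N) (K j : ℕ) (hj : 1 ≤ j) :
    Ei P hN2 K j ⊆ ⋃ m, (Fi P hN2 K j m ∩ {ω | 1 ≤ Znum P hN2 (m+1) ω}) := by
  intro ω hω
  obtain ⟨m, hjm, hs⟩ := hω
  have hex : ∃ t, j ≤ cnt P hN2 K (t+1) ω := ⟨m, hjm⟩
  have h1 := Nat.find_spec hex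
  have htm : Nat.find hex ≤ m := Nat.find_min' hex hjm
  have h2 : cnt P hN2 K (Nat.find hex) ω < j := by
    rcases Nat.eq_zero_or_pos (Nat.find hex) with ht0 | htpos
    · rw [ht0]
      have hz : cnt P hN2 K 0 ω = 0 := by simp [cnt]
      omega
    · have hlt : Nat.find hex - 1 < Nat.find hex := by omega
      have := Nat.find_min hex hlt
      push_neg at this
      have heq : Nat.find hex - 1 + 1 = Nat.find hex := by omega
      rwa [heq] at this
  have h3 := cnt_succ P hN2 K (Nat.find hex) ω
  have h4 : ω ∈ LowE P hN2 K (Nat.find hex) := by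
    by_contra hcon
    rw [if_neg hcon] at h3
    omega
  rw [if_pos h4] at h3
  rw [Set.mem_iUnion]
  refine ⟨Nat.find hex, ⟨h4, by omega⟩, ?_⟩
  exact Znum_mono_le hN2 (by omega) hs

lemma Fi_subset (P : Perc 2 N μ p) (hN2 : 2 ≤ N) (K j : ℕ) (hj : 2 ≤ j) (m : ℕ) :
    Fi P hN2 K j m ⊆ Ei P hN2 K (j-1) := by
  rintro ω ⟨hLow, hc⟩
  have hm1 : 1 ≤ m := by
    have := cnt_le P hN2 K m ω
    omega
  refine ⟨m - 1, ?_, ?_⟩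
  · have heq : m - 1 + 1 = m := by omega
    rw [heq, hc]
  · have heq : m - 1 + 1 = m := by omega
    rw [heq]
    exact hLow.1

lemma measurableSet_LowE (P : Perc 2 N μ p) (hN2 : 2 ≤ N) (K m : ℕ) :
    MeasurableSet (LowE P hN2 K m) := by
  have h : LowE P hN2 K m = (fun ω => Znum P hN2 m ω) ⁻¹' {t | 1 ≤ t ∧ t ≤ K} := rfl
  rw [h]
  exact measurable_Znum P hN2 m trivial

lemma measurable_cnt (P : Perc 2 N μ p) (hN2 : 2 ≤ N) (K n : ℕ) :
    Measurable (cnt P hN2 K n) := by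
  have h : cnt P hN2 K n = fun ω =>
      ∑ m ∈ Finset.range n, (if ω ∈ LowE P hN2 K m then 1 else 0) := by
    funext ω
    rw [cnt, Finset.card_filter]
  rw [h]
  exact Finset.measurable_sum _ fun m _ =>
    Measurable.ite (measurableSet_LowE P hN2 K m) measurable_const measurable_const

lemma measurableSet_Fi (P : Perc 2 N μ p) (hN2 : 2 ≤ N) (K j m : ℕ) :
    MeasurableSet (Fi P hN2 K j m) := by
  have h : Fi P hN2 K j m = LowE P hN2 K m ∩ (cnt P hN2 K m) ⁻¹' {j - 1} := rfl
  rw [h]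
  exact (measurableSet_LowE P hN2 K m).inter ((measurable_cnt P hN2 K m) trivial)

lemma measurableSet_ZnumGE (P : Perc 2 N μ p) (hN2 : 2 ≤ N) (n : ℕ) :
    MeasurableSet {ω | 1 ≤ Znum P hN2 n ω} := by
  have h : {ω | 1 ≤ Znum P hN2 n ω} = (fun ω => Znum P hN2 n ω) ⁻¹' {t | 1 ≤ t} := rfl
  rw [h]
  exact measurable_Znum P hN2 n trivial

lemma Fi_disjoint (P : Perc 2 N μ p) (hN2 : 2 ≤ N) (K j : ℕ) (hj : 1 ≤ j) :
    Pairwise (Function.onFun Disjoint (fun m => Fi P hN2 K j m)) := by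
  intro m m' hne
  rw [Function.onFun, Set.disjoint_left]
  rintro ω ⟨hL, hc⟩ ⟨hL', hc'⟩
  rcases Nat.lt_or_ge m m' with h | h
  · have h1 : cnt P hN2 K (m+1) ω ≤ cnt P hN2 K m' ω := cnt_mono P hN2 K (by omega) ω
    have h2 := cnt_succ P hN2 K m ω
    rw [if_pos hL] at h2
    omega
  · have hlt : m' < m := by omega
    have h1 : cnt P hN2 K (m'+1) ω ≤ cnt P hN2 K m ω := cnt_mono P hN2 K (by omega) ω
    have h2 := cnt_succ P hN2 K m' ω
    rw [if_pos hL'] at h2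
    omega

lemma Fi_dep (P : Perc 2 N μ p) (hN2 : 2 ≤ N) (K j m : ℕ) :
    ∀ ω ω', (∀ t (_ : t ≤ m+1) (c : Code 2 N t), P.Y ⟨t, c⟩ ω = P.Y ⟨t, c⟩ ω') →
      ω ∈ Fi P hN2 K j m → ω' ∈ Fi P hN2 K j m := by
  intro ω ω' hag hω
  have hZ : ∀ t, t ≤ m → Znum P hN2 t ω = Znum P hN2 t ω' := by
    intro t ht
    apply Znum_dep P hN2
    intro s hs c
    exact hag s (by omega) c
  have hLow : ∀ t, t ≤ m → (ω ∈ LowE P hN2 K t ↔ ω' ∈ LowE P hN2 K t) := by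
    intro t ht
    rw [LowE, Set.mem_setOf_eq, Set.mem_setOf_eq, hZ t ht]
  have hcnt : cnt P hN2 K m ω = cnt P hN2 K m ω' := by
    rw [cnt, cnt]
    congr 1
    apply Finset.filter_congr
    intro t ht
    rw [Finset.mem_range] at ht
    exact hLow t (by omega)
  exact ⟨(hLow m (le_refl m)).mp hω.1, by rw [← hcnt]; exact hω.2⟩

lemma Ei_bound [IsProbabilityMeasure μ] (P : Perc 2 N μ p) (hN2 : 2 ≤ N)
    (hpq : ∀ n, p (n+1) = q) (K : ℕ) (j : ℕ) :
    μ (Ei P hN2 K (j+1)) ≤ (1 - (1 - ENNReal.ofReal q) ^ (N*K)) ^ (j+1) := by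
  induction j with
  | zero =>
      calc μ (Ei P hN2 K 1) ≤ (1 - (1 - ENNReal.ofReal q) ^ (N*K)) * μ Set.univ := by
            have hstep : ∀ m : ℕ, μ (Fi P hN2 K 1 m ∩ {ω | 1 ≤ Znum P hN2 (m+1) ω})
                ≤ (1 - (1 - ENNReal.ofReal q) ^ (N*K)) * μ (Fi P hN2 K 1 m) :=
              fun m => key_step P hN2 hpq K m _ (Fi_dep P hN2 K 1 m)
                (fun ω hω => hω.1)
            calc μ (Ei P hN2 K 1)
                ≤ μ (⋃ m, (Fi P hN2 K 1 m ∩ {ω | 1 ≤ Znum P hN2 (m+1) ω})) :=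
                  measure_mono (Ei_subset P hN2 K 1 (le_refl 1))
              _ ≤ ∑' m, μ (Fi P hN2 K 1 m ∩ {ω | 1 ≤ Znum P hN2 (m+1) ω}) :=
                  measure_iUnion_le _
              _ ≤ ∑' m, (1 - (1 - ENNReal.ofReal q) ^ (N*K)) * μ (Fi P hN2 K 1 m) :=
                  ENNReal.tsum_le_tsum hstep
              _ = (1 - (1 - ENNReal.ofReal q) ^ (N*K)) * ∑' m, μ (Fi P hN2 K 1 m) :=
                  ENNReal.tsum_mul_left
              _ = (1 - (1 - ENNReal.ofReal q) ^ (N*K)) * μ (⋃ m, Fi P hN2 K 1 m) := by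
                  rw [measure_iUnion (Fi_disjoint P hN2 K 1 (le_refl 1))
                    (fun m => measurableSet_Fi P hN2 K 1 m)]
              _ ≤ (1 - (1 - ENNReal.ofReal q) ^ (N*K)) * μ Set.univ :=
                  mul_le_mul_right (measure_mono (Set.subset_univ _)) _
        _ = (1 - (1 - ENNReal.ofReal q) ^ (N*K)) ^ 1 := by
            rw [measure_univ, mul_one, pow_one]
  | succ j ih =>
      have hstep : ∀ m : ℕ, μ (Fi P hN2 K (j+2) m ∩ {ω | 1 ≤ Znum P hN2 (m+1) ω})
          ≤ (1 - (1 - ENNReal.ofReal q) ^ (N*K)) * μ (Fi P hN2 K (j+2) m) :=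
        fun m => key_step P hN2 hpq K m _ (Fi_dep P hN2 K (j+2) m)
          (fun ω hω => hω.1)
      calc μ (Ei P hN2 K (j+2))
          ≤ μ (⋃ m, (Fi P hN2 K (j+2) m ∩ {ω | 1 ≤ Znum P hN2 (m+1) ω})) :=
            measure_mono (Ei_subset P hN2 K (j+2) (by omega))
        _ ≤ ∑' m, μ (Fi P hN2 K (j+2) m ∩ {ω | 1 ≤ Znum P hN2 (m+1) ω}) :=
            measure_iUnion_le _
        _ ≤ ∑' m, (1 - (1 - ENNReal.ofReal q) ^ (N*K)) * μ (Fi P hN2 K (j+2) m) :=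
            ENNReal.tsum_le_tsum hstep
        _ = (1 - (1 - ENNReal.ofReal q) ^ (N*K)) * ∑' m, μ (Fi P hN2 K (j+2) m) :=
            ENNReal.tsum_mul_left
        _ = (1 - (1 - ENNReal.ofReal q) ^ (N*K)) * μ (⋃ m, Fi P hN2 K (j+2) m) := by
            rw [measure_iUnion (Fi_disjoint P hN2 K (j+2) (by omega))
              (fun m => measurableSet_Fi P hN2 K (j+2) m)]
        _ ≤ (1 - (1 - ENNReal.ofReal q) ^ (N*K)) * μ (Ei P hN2 K (j+1)) := by
            apply mul_le_mul_right
            apply measure_mono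
            apply Set.iUnion_subset
            intro m
            have := Fi_subset P hN2 K (j+2) (by omega) m
            simpa using this
        _ ≤ (1 - (1 - ENNReal.ofReal q) ^ (N*K)) * (1 - (1 - ENNReal.ofReal q) ^ (N*K)) ^ (j+1) :=
            mul_le_mul_right ih _
        _ = (1 - (1 - ENNReal.ofReal q) ^ (N*K)) ^ (j+2) := by ring

end Recursion


section Extinction

variable {q : ℝ}

lemma Sinf_null [IsProbabilityMeasure μ] (P : Perc 2 N μ p) (hN2 : 2 ≤ N)
    (hpq : ∀ n, p (n+1) = q) (hq1 : q < 1)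
    (hNqE : (N : ℝ≥0∞) * ENNReal.ofReal q ^ 2 ≤ 1) :
    μ (⋂ n, {ω | 1 ≤ Znum P hN2 n ω}) = 0 := by
  classical
  set Sinf : Set Ω := ⋂ n, {ω | 1 ≤ Znum P hN2 n ω} with hSinf
  set W : Ω → ℝ≥0∞ := fun ω => Filter.liminf (fun n => (Znum P hN2 n ω : ℝ≥0∞)) Filter.atTop
    with hW
  have hmeascast : ∀ n, Measurable (fun ω => (Znum P hN2 n ω : ℝ≥0∞)) := fun n =>
    measurable_from_top.comp (measurable_Znum P hN2 n)
  have hWmeas : Measurable W := Measurable.liminf hmeascast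
  have hlintW : ∫⁻ ω, W ω ∂μ ≤ 3 := by
    calc ∫⁻ ω, W ω ∂μ ≤ Filter.liminf (fun n => ∫⁻ ω, (Znum P hN2 n ω : ℝ≥0∞) ∂μ) Filter.atTop :=
          MeasureTheory.lintegral_liminf_le hmeascast
      _ ≤ 3 := by
          exact Filter.liminf_le_of_frequently_le'
            (Filter.Frequently.of_forall (fun n => lint_Znum_le_three P hN2 hpq hNqE n))
  have hMarkov : ∀ K : ℕ, μ {ω | ((K:ℝ≥0∞)+1) ≤ W ω} ≤ 3 / ((K:ℝ≥0∞)+1) := by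
    intro K
    calc μ {ω | ((K:ℝ≥0∞)+1) ≤ W ω}
        ≤ (∫⁻ ω, W ω ∂μ) / ((K:ℝ≥0∞)+1) :=
          MeasureTheory.meas_ge_le_lintegral_div hWmeas.aemeasurable
            (by simp) (by simp)
      _ ≤ 3 / ((K:ℝ≥0∞)+1) := ENNReal.div_le_div_right hlintW _
  have hfreq : ∀ (K : ℕ) (ω : Ω), ω ∈ Sinf → W ω < (K:ℝ≥0∞)+1 →
      ω ∈ ⋂ j, Ei P hN2 K j := by
    intro K ω hωS hWlt
    have hSn : ∀ n, 1 ≤ Znum P hN2 n ω := by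
      intro n
      have := Set.mem_iInter.mp hωS n
      exact this
    have hcob : Filter.IsCoboundedUnder (· ≥ ·) Filter.atTop
        (fun n => (Znum P hN2 n ω : ℝ≥0∞)) :=
      Filter.isCoboundedUnder_ge_of_eventually_le Filter.atTop
        (x := ⊤) (Filter.Eventually.of_forall fun n => le_top)
    have hfr : ∃ᶠ n in Filter.atTop, (Znum P hN2 n ω : ℝ≥0∞) < (K:ℝ≥0∞)+1 :=
      Filter.frequently_lt_of_liminf_lt hcob hWlt
    have hfr' : ∀ m, ∃ n, m ≤ n ∧ Znum P hN2 n ω ≤ K := by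
      intro m
      obtain ⟨n, hn, hlt⟩ := (Filter.frequently_atTop.mp hfr) m
      refine ⟨n, hn, ?_⟩
      have : (Znum P hN2 n ω : ℝ≥0∞) < ((K+1 : ℕ) : ℝ≥0∞) := by
        push_cast
        exact hlt
      have h2 : Znum P hN2 n ω < K + 1 := by exact_mod_cast this
      omega
    rw [Set.mem_iInter]
    intro j
    induction j with
    | zero => exact ⟨0, Nat.zero_le _, hSn 1⟩
    | succ j ih =>
        obtain ⟨m, hjm, _⟩ := ih
        obtain ⟨n, hn, hZK⟩ := hfr' (m+1)
        have hLow : ω ∈ LowE P hN2 K n := ⟨hSn n, hZK⟩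
        refine ⟨n, ?_, hSn (n+1)⟩
        have h2 := cnt_succ P hN2 K n ω
        rw [if_pos hLow] at h2
        have h3 : cnt P hN2 K (m+1) ω ≤ cnt P hN2 K n ω := cnt_mono P hN2 K hn ω
        omega
  have htail : ∀ K : ℕ, μ (⋂ j, Ei P hN2 K j) = 0 := by
    intro K
    have hqE1 : ENNReal.ofReal q < 1 := ENNReal.ofReal_lt_one.mpr hq1
    have hδpos : (0:ℝ≥0∞) < (1 - ENNReal.ofReal q) ^ (N*K) :=
      ENNReal.pow_pos (tsub_pos_of_lt hqE1) _
    have hlt1 : 1 - (1 - ENNReal.ofReal q) ^ (N*K) < 1 :=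
      ENNReal.sub_lt_self (by simp) (by simp) (ne_of_gt hδpos)
    have htend := ENNReal.tendsto_pow_atTop_nhds_zero_of_lt_one hlt1
    apply le_antisymm _ (by simp)
    apply ge_of_tendsto htend
    filter_upwards [Filter.eventually_ge_atTop 1] with j hj
    obtain ⟨j', rfl⟩ : ∃ j', j = j' + 1 := ⟨j - 1, by omega⟩
    calc μ (⋂ j'', Ei P hN2 K j'') ≤ μ (Ei P hN2 K (j'+1)) :=
          measure_mono (Set.iInter_subset _ _)
      _ ≤ (1 - (1 - ENNReal.ofReal q) ^ (N*K)) ^ (j'+1) := Ei_bound P hN2 hpq K j'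
  have hK : ∀ K : ℕ, μ Sinf ≤ 3 / ((K:ℝ≥0∞)+1) := by
    intro K
    have hsplit : Sinf ⊆ (Sinf ∩ {ω | W ω < (K:ℝ≥0∞)+1}) ∪ {ω | ((K:ℝ≥0∞)+1) ≤ W ω} := by
      intro ω hω
      rcases lt_or_ge (W ω) ((K:ℝ≥0∞)+1) with h | h
      · exact Or.inl ⟨hω, h⟩
      · exact Or.inr h
    calc μ Sinf ≤ μ ((Sinf ∩ {ω | W ω < (K:ℝ≥0∞)+1}) ∪ {ω | ((K:ℝ≥0∞)+1) ≤ W ω}) :=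
          measure_mono hsplit
      _ ≤ μ (Sinf ∩ {ω | W ω < (K:ℝ≥0∞)+1}) + μ {ω | ((K:ℝ≥0∞)+1) ≤ W ω} :=
          measure_union_le _ _
      _ ≤ 0 + 3 / ((K:ℝ≥0∞)+1) := by
          apply add_le_add
          · have hsub : Sinf ∩ {ω | W ω < (K:ℝ≥0∞)+1} ⊆ ⋂ j, Ei P hN2 K j := by
              rintro ω ⟨h1, h2⟩
              exact hfreq K ω h1 h2
            exact le_of_eq (measure_mono_null hsub (htail K))
          · exact hMarkov K
      _ = 3 / ((K:ℝ≥0∞)+1) := by rw [zero_add]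
  apply le_antisymm _ (by simp)
  have htendK : Filter.Tendsto (fun K : ℕ => 3 / ((K:ℝ≥0∞)+1)) Filter.atTop (nhds 0) := by
    have h1 : Filter.Tendsto (fun K : ℕ => ((K:ℝ≥0∞)+1)⁻¹) Filter.atTop (nhds 0) := by
      have h2 : ∀ K : ℕ, ((K:ℝ≥0∞)+1)⁻¹ = (((K+1 : ℕ)):ℝ≥0∞)⁻¹ := by
        intro K
        push_cast
        rfl
      simp_rw [h2]
      exact (ENNReal.tendsto_inv_nat_nhds_zero).comp (Filter.tendsto_add_atTop_nat 1)
    have h3 := ENNReal.Tendsto.const_mul h1 (Or.inr (by simp : (3:ℝ≥0∞) ≠ ⊤))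
    simp only [mul_zero] at h3
    have h4 : (fun K : ℕ => 3 / ((K:ℝ≥0∞)+1)) = fun K : ℕ => 3 * ((K:ℝ≥0∞)+1)⁻¹ := by
      funext K
      rw [div_eq_mul_inv]
    rw [h4]
    exact h3
  apply ge_of_tendsto htendK
  exact Filter.Eventually.of_forall hK

end Extinction


end Prob

end NoCross

/-- For planar Mandelbrot percolation with subdivision parameter `N`,
if `p ≤ N^{-1/2}` then almost surely there is no connected component of the limit set
joining the left side `{0} × [0,1]` and the right side `{1} × [0,1]` of the unit square;
hence the critical probability for left-right crossing satisfies `p_c(N) > N^{-1/2}`. -/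
theorem no_crossing_below_sqrt_threshold
    [IsProbabilityMeasure μ] (hN : 2 ≤ N) (hd : d = 2)
    (q : ℝ) (hq0 : 0 ≤ q) (hqle : q ≤ (N : ℝ) ^ (-(1 / 2) : ℝ))
    (hp : p = fun _ => q) (P : Perc d N μ p) :
    ∀ᵐ ω ∂μ, ¬ ∃ C : Set (Fin d → ℝ),
      C ⊆ P.limitSet ω ∧ IsPreconnected C ∧
      (∃ x ∈ C, x ⟨0, by omega⟩ = 0) ∧ (∃ y ∈ C, y ⟨0, by omega⟩ = 1) := by
  subst hd
  subst hp
  have hpq : ∀ n : ℕ, (fun _ : ℕ => q) (n+1) = q := fun _ => rfl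
  have hN1 : (1:ℝ) < N := by
    have : (2:ℝ) ≤ N := by exact_mod_cast hN
    linarith
  have hq1 : q < 1 := by
    have h2 : (N:ℝ) ^ (-(1/2):ℝ) < 1 :=
      Real.rpow_lt_one_of_one_lt_of_neg hN1 (by norm_num)
    linarith
  have hr2 : ((N:ℝ) ^ (-(1/2):ℝ))^2 = (N:ℝ)⁻¹ := by
    rw [← Real.rpow_natCast ((N:ℝ) ^ (-(1/2):ℝ)) 2, ← Real.rpow_mul (by positivity)]
    norm_num
    exact Real.rpow_neg_one _
  have hq2 : q^2 ≤ (N:ℝ)⁻¹ := by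
    calc q^2 ≤ ((N:ℝ) ^ (-(1/2):ℝ))^2 := by
          apply pow_le_pow_left₀ hq0 hqle
      _ = (N:ℝ)⁻¹ := hr2
  have hNq2 : (N:ℝ) * q^2 ≤ 1 := by
    have hNne : (N:ℝ) ≠ 0 := by positivity
    calc (N:ℝ) * q^2 ≤ (N:ℝ) * (N:ℝ)⁻¹ := by
          apply mul_le_mul_of_nonneg_left hq2 (by positivity)
      _ = 1 := mul_inv_cancel₀ hNne
  have hNqE : (N : ℝ≥0∞) * ENNReal.ofReal q ^ 2 ≤ 1 := by
    have h1 : (N : ℝ≥0∞) * ENNReal.ofReal q ^ 2 = ENNReal.ofReal ((N:ℝ) * q^2) := by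
      rw [ENNReal.ofReal_mul (by positivity), ← ENNReal.ofReal_pow hq0,
        ENNReal.ofReal_natCast]
    rw [h1]
    calc ENNReal.ofReal ((N:ℝ) * q^2) ≤ ENNReal.ofReal 1 := ENNReal.ofReal_le_ofReal hNq2
      _ = 1 := ENNReal.ofReal_one
  have hnull := NoCross.Sinf_null P hN hpq hq1 hNqE
  rw [MeasureTheory.ae_iff]
  simp only [not_not]
  apply measure_mono_null _ hnull
  rintro ω ⟨C, hCsub, hCconn, ⟨x, hxC, hx0⟩, ⟨y, hyC, hy0⟩⟩
  rw [Set.mem_iInter]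
  intro n
  have hlev : C ⊆ P.level (n+1) ω := fun z hz => Set.mem_iInter.mp (hCsub hz) (n+1)
  have hx0' : x 0 = 0 := hx0
  have hy0' : y 0 = 1 := hy0
  exact NoCross.cross_gives_pair hN P n ω hCconn hlev hxC hyC hx0' hy0'

end
end
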